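/- arXiv:1808.01464 — 9 statements merged into one kernel-verified Lean document; each statement's English description precedes it below -/
import Mathlib

section
/- Let A be a vector space over a field K and α : A → A a linear map. For f ∈ C^m_α(A,A), g ∈ C^n_α(A,A), h ∈ C^p_α(A,A) and indices 1 ≤ i ≤ m, 1 ≤ j ≤ n, the α-twisted partial compositions satisfy the vertical (sequential) associativity relation (f ∘_i g) ∘_{i+j-1} h = f ∘_i (g ∘_j h). -/
/-- The cochain on `ℕ`-indexed tuples induced by a multilinear map `Aᵐ → A`
(an element of the Hochschild-type cochain space). -/
def toCochain {K A : Type*} [Field K] [AddCommGroup A] [Module K A] (m : ℕ)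
    (f : MultilinearMap K (fun _ : Fin m => A) A) : (ℕ → A) → A :=
  fun a => f fun j => a j

/-- The `α`-twisted partial composition `f ∘ᵢ g`, where `n` is the arity of `g`
and `i` is the (1-indexed) insertion position:
`(f ∘ᵢ g)(a₁,…) = f(α^[n-1] a₁, …, α^[n-1] a_{i-1}, g(a_i,…,a_{i+n-1}), α^[n-1] a_{i+n}, …)`. -/
def pcomp {A : Type*} (α : A → A) (n : ℕ) (f g : (ℕ → A) → A) (i : ℕ) : (ℕ → A) → A :=
  fun a => f fun j =>
    if j + 1 < i then α^[n - 1] (a j)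
    else if j + 1 = i then g fun k => a (i - 1 + k)
    else α^[n - 1] (a (j + n - 1))

/-- The `α`-twisted circle product
`(f ∘ g)(a₁,…) = ∑_{i=1}^{m} (-1)^{(n-1)(i-1)} f(α^[n-1] a₁, …, g(a_i,…,a_{i+n-1}), …)`,
where `m` is the arity of `f` and `n` the arity of `g`. -/
def circ {A : Type*} [AddCommGroup A] (α : A → A) (m n : ℕ) (f g : (ℕ → A) → A) :
    (ℕ → A) → A :=
  fun a => ∑ i ∈ Finset.range m, ((-1 : ℤ) ^ ((n - 1) * i)) • pcomp α n f g (i + 1) a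

/-- The `α`-twisted cup product
`(f ∪ g)(a₁,…,a_{m+n}) = μ(f(α^[n-1] a₁,…,α^[n-1] a_m), g(α^[m-1] a_{m+1},…,α^[m-1] a_{m+n}))`. -/
def cup {A : Type*} (μ : A → A → A) (α : A → A) (m n : ℕ) (f g : (ℕ → A) → A) :
    (ℕ → A) → A :=
  fun a => μ (f fun j => α^[n - 1] (a j)) (g fun j => α^[m - 1] (a (m + j)))

/-- The Hochschild-type coboundary of a hom-associative algebra `(A, μ, α)`:
`(δ f)(a₁,…,a_{n+1}) = μ(α^[n-1] a₁, f(a₂,…,a_{n+1}))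
  + ∑_{i=1}^{n} (-1)^i f(α a₁,…, μ(a_i,a_{i+1}), …, α a_{n+1})
  + (-1)^{n+1} μ(f(a₁,…,a_n), α^[n-1] a_{n+1})`. -/
def hdelta {A : Type*} [AddCommGroup A] (μ : A → A → A) (α : A → A) (n : ℕ)
    (f : (ℕ → A) → A) : (ℕ → A) → A :=
  fun a =>
    μ (α^[n - 1] (a 0)) (f fun j => a (j + 1))
      + ∑ i ∈ Finset.range n, ((-1 : ℤ) ^ (i + 1)) •
          f (fun j => if j < i then α (a j)
            else if j = i then μ (a i) (a (i + 1)) else α (a (j + 1)))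
      + ((-1 : ℤ) ^ (n + 1)) • μ (f a) (α^[n - 1] (a n))

/-- The degree `-1` graded Lie bracket `[f,g] = f ∘ g - (-1)^{(m-1)(n-1)} g ∘ f`. -/
def brkt {A : Type*} [AddCommGroup A] (α : A → A) (m n : ℕ) (f g : (ℕ → A) → A) :
    (ℕ → A) → A :=
  fun a => circ α m n f g a - ((-1 : ℤ) ^ ((m - 1) * (n - 1))) • circ α n m g f a

/-- The dot product `f · g = (-1)^{mn} f ∪ g`. -/
def dotp {A : Type*} [AddCommGroup A] (μ : A → A → A) (α : A → A) (m n : ℕ)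
    (f g : (ℕ → A) → A) : (ℕ → A) → A :=
  fun a => ((-1 : ℤ) ^ (m * n)) • cup μ α m n f g a

/-- For `f ∈ C^m_α(A,A)`, `g ∈ C^n_α(A,A)`, `h ∈ C^p_α(A,A)` and
`1 ≤ i ≤ m`, `1 ≤ j ≤ n`, the `α`-twisted partial compositions satisfy the vertical
(sequential) associativity relation `(f ∘ᵢ g) ∘_{i+j-1} h = f ∘ᵢ (g ∘ⱼ h)`. -/
theorem pcomp_vertical_associativity {K A : Type*} [Field K] [AddCommGroup A] [Module K A]
    (α : A →ₗ[K] A) (m n p i j : ℕ) (hp : 1 ≤ p)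
    (hi1 : 1 ≤ i) (hi2 : i ≤ m) (hj1 : 1 ≤ j) (hj2 : j ≤ n)
    (f : MultilinearMap K (fun _ : Fin m => A) A)
    (g : MultilinearMap K (fun _ : Fin n => A) A)
    (h : MultilinearMap K (fun _ : Fin p => A) A)
    (hf : ∀ a : Fin m → A, α (f a) = f fun t => α (a t))
    (hg : ∀ a : Fin n → A, α (g a) = g fun t => α (a t))
    (hh : ∀ a : Fin p → A, α (h a) = h fun t => α (a t)) :
    ∀ a : ℕ → A,
      pcomp (⇑α) p (pcomp (⇑α) n (toCochain m f) (toCochain n g) i) (toCochain p h)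
          (i + j - 1) a
        = pcomp (⇑α) (n + p - 1) (toCochain m f)
            (pcomp (⇑α) p (toCochain n g) (toCochain p h) j) i a := by
  intro a
  have hn : 1 ≤ n := le_trans hj1 hj2
  simp only [pcomp, toCochain]
  refine congrArg _ (funext fun s => ?_)
  rcases lt_trichotomy ((s : ℕ) + 1) i with h1 | h1 | h1
  · have h2 : (s : ℕ) + 1 < i + j - 1 := by omega
    simp only [if_pos h1, if_pos h2, ← Function.iterate_add_apply]
    congr 1
    omega
  · have c1 : ¬ ((s : ℕ) + 1 < i) := by omega
    simp only [if_neg c1, if_pos h1]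
    refine congrArg _ (funext fun u => ?_)
    rcases lt_trichotomy ((u : ℕ) + 1) j with h3 | h3 | h3
    · have d1 : i - 1 + (u : ℕ) + 1 < i + j - 1 := by omega
      simp only [if_pos h3, if_pos d1]
    · have d1 : ¬ (i - 1 + (u : ℕ) + 1 < i + j - 1) := by omega
      have d2 : i - 1 + (u : ℕ) + 1 = i + j - 1 := by omega
      have e1 : ¬ ((u : ℕ) + 1 < j) := by omega
      simp only [if_neg d1, if_pos d2, if_neg e1, if_pos h3]
      refine congrArg _ (funext fun v => ?_)
      congr 1
      omega
    · have d1 : ¬ (i - 1 + (u : ℕ) + 1 < i + j - 1) := by omega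
      have d2 : ¬ (i - 1 + (u : ℕ) + 1 = i + j - 1) := by omega
      have e1 : ¬ ((u : ℕ) + 1 < j) := by omega
      have e2 : ¬ ((u : ℕ) + 1 = j) := by omega
      simp only [if_neg d1, if_neg d2, if_neg e1, if_neg e2]
      have : i - 1 + (u : ℕ) + p - 1 = i - 1 + ((u : ℕ) + p - 1) := by omega
      rw [this]
  · have c1 : ¬ ((s : ℕ) + 1 < i) := by omega
    have c2 : ¬ ((s : ℕ) + 1 = i) := by omega
    have d1 : ¬ ((s : ℕ) + n - 1 + 1 < i + j - 1) := by omega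
    have d2 : ¬ ((s : ℕ) + n - 1 + 1 = i + j - 1) := by omega
    simp only [if_neg c1, if_neg c2, if_neg d1, if_neg d2, ← Function.iterate_add_apply]
    have e1 : n - 1 + (p - 1) = n + p - 1 - 1 := by omega
    have e2 : (s : ℕ) + n - 1 + p - 1 = (s : ℕ) + (n + p - 1) - 1 := by omega
    rw [e1, e2]
end

section
/- Let A be a vector space over a field K and α : A → A a linear map. For f ∈ C^m_α(A,A), g ∈ C^n_α(A,A), h ∈ C^p_α(A,A) and indices 1 ≤ i < j ≤ m, the α-twisted partial compositions satisfy the horizontal (parallel) commutativity relation (f ∘_i g) ∘_{j+n-1} h = (f ∘_j h) ∘_i g. -/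
/-- For `f ∈ C^m_α(A,A)`, `g ∈ C^n_α(A,A)`, `h ∈ C^p_α(A,A)` and
`1 ≤ i < j ≤ m`, the `α`-twisted partial compositions satisfy the horizontal
(parallel) commutativity relation `(f ∘ᵢ g) ∘_{j+n-1} h = (f ∘ⱼ h) ∘ᵢ g`. -/
theorem pcomp_horizontal_commutativity {K A : Type*} [Field K] [AddCommGroup A] [Module K A]
    (α : A →ₗ[K] A) (m n p i j : ℕ) (hn : 1 ≤ n) (hp : 1 ≤ p)
    (hi1 : 1 ≤ i) (hij : i < j) (hj2 : j ≤ m)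
    (f : MultilinearMap K (fun _ : Fin m => A) A)
    (g : MultilinearMap K (fun _ : Fin n => A) A)
    (h : MultilinearMap K (fun _ : Fin p => A) A)
    (hf : ∀ a : Fin m → A, α (f a) = f fun t => α (a t))
    (hg : ∀ a : Fin n → A, α (g a) = g fun t => α (a t))
    (hh : ∀ a : Fin p → A, α (h a) = h fun t => α (a t)) :
    ∀ a : ℕ → A,
      pcomp (⇑α) p (pcomp (⇑α) n (toCochain m f) (toCochain n g) i) (toCochain p h)
          (j + n - 1) a
        = pcomp (⇑α) n (pcomp (⇑α) p (toCochain m f) (toCochain p h) j)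
            (toCochain n g) i a := by
  have hgI : ∀ (k : ℕ) (a : Fin n → A), (⇑α)^[k] (g a) = g fun t => (⇑α)^[k] (a t) := by
    intro k
    induction k with
    | zero => intro a; simp
    | succ k ih =>
      intro a
      simp only [Function.iterate_succ_apply', ih, hg]
  have hhI : ∀ (k : ℕ) (a : Fin p → A), (⇑α)^[k] (h a) = h fun t => (⇑α)^[k] (a t) := by
    intro k
    induction k with
    | zero => intro a; simp
    | succ k ih =>
      intro a
      simp only [Function.iterate_succ_apply', ih, hh]
  have swap : ∀ (u v : ℕ) (x : A), (⇑α)^[u] ((⇑α)^[v] x) = (⇑α)^[v] ((⇑α)^[u] x) := by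
    intro u v x
    rw [← Function.iterate_add_apply, ← Function.iterate_add_apply, Nat.add_comm]
  intro a
  simp only [pcomp, toCochain]
  refine congrArg f (funext fun t => ?_)
  have ht := t.isLt
  split_ifs <;> try (exfalso; omega)
  all_goals
    first
    | exact swap _ _ _
    | (rw [show (t:ℕ) + n - 1 + p - 1 = (t:ℕ) + p - 1 + n - 1 from by omega]
       exact swap _ _ _)
    | (rw [hgI]
       refine congrArg g (funext fun k => ?_)
       have hk := k.isLt
       rw [if_pos (show i - 1 + (k:ℕ) + 1 < j + n - 1 by omega)])
    | (rw [hhI]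
       refine congrArg h (funext fun k => ?_)
       have hk := k.isLt
       rw [if_neg (show ¬ (j - 1 + (k:ℕ) + 1 < i) by omega),
           if_neg (show ¬ (j - 1 + (k:ℕ) + 1 = i) by omega),
           show j + n - 1 - 1 + (k:ℕ) = j - 1 + (k:ℕ) + n - 1 from by omega])
end

section
/- Let (A, μ, α) be a hom-associative algebra. For every f ∈ C^n_α(A,A), the Hochschild-type coboundary δ_α f again satisfies the α-compatibility condition, i.e. δ_α f ∈ C^{n+1}_α(A,A). -/
set_option linter.unreachableTactic false
set_option linter.unnecessarySeqFocus false
set_option linter.unusedTactic false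
set_option maxHeartbeats 1000000

/-- Auxiliary: the `i`-th middle argument tuple of the Hochschild coboundary, in `Fin` form. -/
private def gmid {A : Type*} (μ : A → A → A) (α : A → A) (n i : ℕ) (a : Fin (n + 1) → A) :
    Fin n → A :=
  fun j => if (j : ℕ) < i then α (a j.castSucc)
    else if (j : ℕ) = i then μ (a j.castSucc) (a j.succ) else α (a j.succ)

private lemma gmid_update {A : Type*} (μ : A → A → A) (α : A → A) (n i : ℕ) (hi : i < n)
    (a : Fin (n + 1) → A) (k : Fin (n + 1)) :
    ∃ (s : Fin n) (h : A → A),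
      (h = α ∨ h = (fun v => μ v (a ⟨i + 1, by omega⟩)) ∨ h = (fun v => μ (a ⟨i, by omega⟩) v)) ∧
      ∀ v, gmid μ α n i (Function.update a k v) =
        Function.update (gmid μ α n i a) s (h v) := by
  by_cases h1 : (k : ℕ) < i
  · refine ⟨⟨(k : ℕ), h1.trans hi⟩, α, Or.inl rfl, fun v => ?_⟩
    funext j
    simp only [gmid, Function.update_apply, Fin.ext_iff, Fin.coe_castSucc, Fin.val_succ]
    split_ifs <;> first | rfl | omega | (exfalso; omega)
  by_cases h2 : (k : ℕ) = i
  · refine ⟨⟨i, hi⟩, _, Or.inr (Or.inl rfl), fun v => ?_⟩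
    funext j
    simp only [gmid, Function.update_apply, Fin.ext_iff, Fin.coe_castSucc, Fin.val_succ]
    split_ifs <;>
      first
        | rfl
        | omega
        | (exfalso; omega)
        | (congr 1 <;> first | rfl | exact congrArg a (Fin.ext (by simp; omega)))
  by_cases h3 : (k : ℕ) = i + 1
  · refine ⟨⟨i, hi⟩, _, Or.inr (Or.inr rfl), fun v => ?_⟩
    funext j
    simp only [gmid, Function.update_apply, Fin.ext_iff, Fin.coe_castSucc, Fin.val_succ]
    split_ifs <;>
      first
        | rfl
        | omega
        | (exfalso; omega)
        | (congr 1 <;> first | rfl | exact congrArg a (Fin.ext (by simp; omega)))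
  · have hk : (k : ℕ) < n + 1 := k.isLt
    refine ⟨⟨(k : ℕ) - 1, by omega⟩, α, Or.inl rfl, fun v => ?_⟩
    funext j
    simp only [gmid, Function.update_apply, Fin.ext_iff, Fin.coe_castSucc, Fin.val_succ]
    split_ifs <;> first | rfl | omega | (exfalso; omega)

/-- Let `(A, μ, α)` be a hom-associative algebra. For every
`f ∈ C^n_α(A,A)`, the Hochschild-type coboundary `δ_α f` again satisfies the
`α`-compatibility condition, i.e. `δ_α f ∈ C^{n+1}_α(A,A)`. -/
theorem hdelta_mem_twisted_cochain {K A : Type*} [Field K] [AddCommGroup A] [Module K A]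
    (μ : A →ₗ[K] A →ₗ[K] A) (α : A →ₗ[K] A)
    (hαμ : ∀ a b : A, α (μ a b) = μ (α a) (α b))
    (hassoc : ∀ a b c : A, μ (α a) (μ b c) = μ (μ a b) (α c))
    (n : ℕ) (hn : 1 ≤ n)
    (f : MultilinearMap K (fun _ : Fin n => A) A)
    (hf : ∀ a : Fin n → A, α (f a) = f fun j => α (a j)) :
    ∃ F : MultilinearMap K (fun _ : Fin (n + 1) => A) A,
      (∀ a : Fin (n + 1) → A, α (F a) = F fun j => α (a j)) ∧
      toCochain (n + 1) F = hdelta (fun x y => μ x y) (⇑α) n (toCochain n f) := by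
  have hiter_add : ∀ (m : ℕ) (x y : A), (⇑α)^[m] (x + y) = (⇑α)^[m] x + (⇑α)^[m] y := by
    intro m
    induction m with
    | zero => intro x y; simp
    | succ m ih => intro x y; simp [Function.iterate_succ_apply', ih]
  have hiter_smul : ∀ (m : ℕ) (c : K) (x : A), (⇑α)^[m] (c • x) = c • (⇑α)^[m] x := by
    intro m
    induction m with
    | zero => intro c x; simp
    | succ m ih => intro c x; simp [Function.iterate_succ_apply', ih]
  have hiter_comm : ∀ (m : ℕ) (x : A), α ((⇑α)^[m] x) = (⇑α)^[m] (α x) := by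
    intro m x
    exact (Function.iterate_succ_apply' (⇑α) m x).symm.trans (Function.iterate_succ_apply (⇑α) m x)
  -- additivity / homogeneity of the middle terms
  have hmid_add : ∀ (i : ℕ), i < n → ∀ (a : Fin (n + 1) → A) (k : Fin (n + 1)) (x y : A),
      f (gmid (fun x y => μ x y) (⇑α) n i (Function.update a k (x + y))) =
        f (gmid (fun x y => μ x y) (⇑α) n i (Function.update a k x)) +
          f (gmid (fun x y => μ x y) (⇑α) n i (Function.update a k y)) := by
    intro i hi a k x y
    obtain ⟨s, h, hcase, hrep⟩ := gmid_update (fun x y => μ x y) (⇑α) n i hi a k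
    have hadd : h (x + y) = h x + h y := by
      rcases hcase with rfl | rfl | rfl <;> simp [map_add]
    rw [hrep, hrep, hrep, hadd, f.map_update_add]
  have hmid_smul : ∀ (i : ℕ), i < n → ∀ (a : Fin (n + 1) → A) (k : Fin (n + 1)) (c : K) (x : A),
      f (gmid (fun x y => μ x y) (⇑α) n i (Function.update a k (c • x))) =
        c • f (gmid (fun x y => μ x y) (⇑α) n i (Function.update a k x)) := by
    intro i hi a k c x
    obtain ⟨s, h, hcase, hrep⟩ := gmid_update (fun x y => μ x y) (⇑α) n i hi a k
    have hsm : h (c • x) = c • h x := by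
      rcases hcase with rfl | rfl | rfl <;> simp [map_smul]
    rw [hrep, hrep, hsm, f.map_update_smul]
  refine ⟨⟨fun a => μ ((⇑α)^[n - 1] (a 0)) (f (Fin.tail a))
      + ∑ i ∈ Finset.range n, ((-1 : ℤ) ^ (i + 1)) • f (gmid (fun x y => μ x y) (⇑α) n i a)
      + ((-1 : ℤ) ^ (n + 1)) • μ (f (Fin.init a)) ((⇑α)^[n - 1] (a (Fin.last n))),
    ?_, ?_⟩, ?_, ?_⟩
  · -- map_update_add'
    intro inst a k x y
    have hinst : inst = instDecidableEqFin (n + 1) := Subsingleton.elim _ _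
    subst hinst
    have e1 : μ ((⇑α)^[n - 1] (Function.update a k (x + y) 0))
          (f (Fin.tail (Function.update a k (x + y)))) =
        μ ((⇑α)^[n - 1] (Function.update a k x 0)) (f (Fin.tail (Function.update a k x))) +
          μ ((⇑α)^[n - 1] (Function.update a k y 0)) (f (Fin.tail (Function.update a k y))) := by
      induction k using Fin.cases with
      | zero =>
        simp only [Function.update_self, Fin.tail_update_zero, hiter_add, map_add,
          LinearMap.add_apply]
      | succ k' =>
        rw [Function.update_of_ne (Fin.succ_ne_zero k').symm, Function.update_of_ne (Fin.succ_ne_zero k').symm,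
          Function.update_of_ne (Fin.succ_ne_zero k').symm, Fin.tail_update_succ, Fin.tail_update_succ,
          Fin.tail_update_succ, f.map_update_add, map_add]
    have e3 : μ (f (Fin.init (Function.update a k (x + y))))
          ((⇑α)^[n - 1] (Function.update a k (x + y) (Fin.last n))) =
        μ (f (Fin.init (Function.update a k x)))
            ((⇑α)^[n - 1] (Function.update a k x (Fin.last n))) +
          μ (f (Fin.init (Function.update a k y)))
            ((⇑α)^[n - 1] (Function.update a k y (Fin.last n))) := by
      induction k using Fin.lastCases with
      | last =>
        simp only [Function.update_self, Fin.init_update_last, hiter_add, map_add]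
      | cast k' =>
        have hne : Fin.last n ≠ k'.castSucc := (Fin.castSucc_lt_last k').ne'
        rw [Function.update_of_ne hne, Function.update_of_ne hne, Function.update_of_ne hne,
          Fin.init_update_castSucc, Fin.init_update_castSucc, Fin.init_update_castSucc,
          f.map_update_add, map_add, LinearMap.add_apply]
    have e2 : ∑ i ∈ Finset.range n, ((-1 : ℤ) ^ (i + 1)) •
          f (gmid (fun x y => μ x y) (⇑α) n i (Function.update a k (x + y))) =
        (∑ i ∈ Finset.range n, ((-1 : ℤ) ^ (i + 1)) •
          f (gmid (fun x y => μ x y) (⇑α) n i (Function.update a k x))) +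
        ∑ i ∈ Finset.range n, ((-1 : ℤ) ^ (i + 1)) •
          f (gmid (fun x y => μ x y) (⇑α) n i (Function.update a k y)) := by
      rw [← Finset.sum_add_distrib]
      refine Finset.sum_congr rfl fun i hi => ?_
      rw [hmid_add i (Finset.mem_range.mp hi) a k x y, smul_add]
    beta_reduce
    rw [e1, e2, e3, smul_add]
    abel
  · -- map_update_smul'
    intro inst a k c x
    have hinst : inst = instDecidableEqFin (n + 1) := Subsingleton.elim _ _
    subst hinst
    have e1 : μ ((⇑α)^[n - 1] (Function.update a k (c • x) 0))
          (f (Fin.tail (Function.update a k (c • x)))) =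
        c • μ ((⇑α)^[n - 1] (Function.update a k x 0)) (f (Fin.tail (Function.update a k x))) := by
      induction k using Fin.cases with
      | zero =>
        simp only [Function.update_self, Fin.tail_update_zero, hiter_smul, map_smul,
          LinearMap.smul_apply]
      | succ k' =>
        rw [Function.update_of_ne (Fin.succ_ne_zero k').symm, Function.update_of_ne (Fin.succ_ne_zero k').symm,
          Fin.tail_update_succ, Fin.tail_update_succ, f.map_update_smul, map_smul]
    have e3 : μ (f (Fin.init (Function.update a k (c • x))))
          ((⇑α)^[n - 1] (Function.update a k (c • x) (Fin.last n))) =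
        c • μ (f (Fin.init (Function.update a k x)))
            ((⇑α)^[n - 1] (Function.update a k x (Fin.last n))) := by
      induction k using Fin.lastCases with
      | last =>
        simp only [Function.update_self, Fin.init_update_last, hiter_smul, map_smul]
      | cast k' =>
        have hne : Fin.last n ≠ k'.castSucc := (Fin.castSucc_lt_last k').ne'
        rw [Function.update_of_ne hne, Function.update_of_ne hne,
          Fin.init_update_castSucc, Fin.init_update_castSucc,
          f.map_update_smul, map_smul, LinearMap.smul_apply]
    have e2 : ∑ i ∈ Finset.range n, ((-1 : ℤ) ^ (i + 1)) •
          f (gmid (fun x y => μ x y) (⇑α) n i (Function.update a k (c • x))) =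
        c • ∑ i ∈ Finset.range n, ((-1 : ℤ) ^ (i + 1)) •
          f (gmid (fun x y => μ x y) (⇑α) n i (Function.update a k x)) := by
      rw [Finset.smul_sum]
      refine Finset.sum_congr rfl fun i hi => ?_
      rw [hmid_smul i (Finset.mem_range.mp hi) a k c x, smul_comm]
    beta_reduce
    rw [e1, e2, e3, smul_comm ((-1 : ℤ) ^ (n + 1)) c, ← smul_add, ← smul_add]
  · -- α-compatibility
    intro a
    show α (μ ((⇑α)^[n - 1] (a 0)) (f (Fin.tail a))
        + ∑ i ∈ Finset.range n, ((-1 : ℤ) ^ (i + 1)) • f (gmid (fun x y => μ x y) (⇑α) n i a)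
        + ((-1 : ℤ) ^ (n + 1)) • μ (f (Fin.init a)) ((⇑α)^[n - 1] (a (Fin.last n)))) = _
    rw [map_add, map_add]
    congr 1
    congr 1
    · -- first term
      rw [hαμ, hiter_comm, hf]
      rfl
    · rw [map_sum]
      refine Finset.sum_congr rfl fun i hi => ?_
      rw [map_zsmul, hf]
      refine congrArg _ (congrArg _ (funext fun j => ?_))
      simp only [gmid]
      split_ifs <;> first | rfl | (exact hαμ _ _)
    · rw [map_zsmul, hαμ, hf, hiter_comm]
      rfl
  · -- evaluation equality
    funext a
    show μ ((⇑α)^[n - 1] (a 0)) (f (Fin.tail fun j : Fin (n + 1) => a (j : ℕ)))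
        + ∑ i ∈ Finset.range n, ((-1 : ℤ) ^ (i + 1)) •
            f (gmid (fun x y => μ x y) (⇑α) n i fun j : Fin (n + 1) => a (j : ℕ))
        + ((-1 : ℤ) ^ (n + 1)) • μ (f (Fin.init fun j : Fin (n + 1) => a (j : ℕ)))
            ((⇑α)^[n - 1] (a n))
      = hdelta (fun x y => μ x y) (⇑α) n (toCochain n f) a
    have t1 : (Fin.tail fun j : Fin (n + 1) => a (j : ℕ)) = fun j : Fin n => a ((j : ℕ) + 1) := by
      funext j
      simp [Fin.tail]
    have t3 : (Fin.init fun j : Fin (n + 1) => a (j : ℕ)) = fun j : Fin n => a (j : ℕ) := by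
      funext j
      simp [Fin.init]
    have t2 : ∀ i : ℕ, (gmid (fun x y => μ x y) (⇑α) n i fun j : Fin (n + 1) => a (j : ℕ)) =
        fun j : Fin n => if (j : ℕ) < i then α (a (j : ℕ))
          else if (j : ℕ) = i then μ (a i) (a (i + 1)) else α (a ((j : ℕ) + 1)) := by
      intro i
      funext j
      simp only [gmid, Fin.coe_castSucc, Fin.val_succ]
      split_ifs with h1 h2 <;> first | rfl | (rw [h2])
    unfold hdelta toCochain
    rw [t1, t3]
    simp only [t2]
end

section
/- Let (A, μ, α) be a hom-associative algebra. The Hochschild-type coboundary operator δ_α on the cochain groups C^•_α(A,A) squares to zero: δ_α ∘ δ_α = 0. -/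
def Dop {A : Type*} (μ : A → A → A) (α : A → A) (i : ℕ) (a : ℕ → A) : ℕ → A :=
  fun j => if j < i then α (a j) else if j = i then μ (a i) (a (i + 1)) else α (a (j + 1))

section DopLemmas
variable {A : Type*} (μ : A → A → A) (α : A → A)

lemma Dop_lt {i j : ℕ} (h : j < i) (a : ℕ → A) : Dop μ α i a j = α (a j) := if_pos h

lemma Dop_eq (i : ℕ) (a : ℕ → A) : Dop μ α i a i = μ (a i) (a (i + 1)) := by
  simp [Dop]

lemma Dop_gt {i j : ℕ} (h : i < j) (a : ℕ → A) : Dop μ α i a j = α (a (j + 1)) := by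
  simp [Dop, Nat.lt_asymm h, Nat.ne_of_gt h]

lemma Dop_comm
    (hαμ : ∀ a b, α (μ a b) = μ (α a) (α b))
    (hassoc : ∀ a b c, μ (α a) (μ b c) = μ (μ a b) (α c))
    {i k : ℕ} (h : i ≤ k) (a : ℕ → A) :
    Dop μ α k (Dop μ α i a) = Dop μ α i (Dop μ α (k + 1) a) := by
  funext j
  rcases lt_trichotomy j i with hj | hj | hj
  · rw [Dop_lt μ α (by omega), Dop_lt μ α hj, Dop_lt μ α hj, Dop_lt μ α (by omega)]
  · subst hj
    rcases eq_or_lt_of_le h with rfl | hik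
    · rw [Dop_eq, Dop_eq, Dop_eq, Dop_gt μ α (by omega), Dop_lt μ α (by omega),
        Dop_eq, hassoc]
    · rw [Dop_lt μ α hik, Dop_eq, Dop_eq, Dop_lt μ α (by omega), Dop_lt μ α (by omega), hαμ]
  · rcases lt_trichotomy j k with hk | hk | hk
    · rw [Dop_lt μ α hk, Dop_gt μ α hj, Dop_gt μ α hj, Dop_lt μ α (by omega)]
    · subst hk
      rw [Dop_eq μ α j, Dop_gt μ α hj, Dop_gt μ α (show i < j + 1 by omega),
        Dop_gt μ α hj, Dop_eq μ α (j + 1), hαμ]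
    · rw [Dop_gt μ α (by omega), Dop_gt μ α (by omega), Dop_gt μ α hj,
        Dop_gt μ α (by omega)]

lemma Dop_shift (i : ℕ) (a : ℕ → A) :
    (fun j => Dop μ α (i + 1) a (j + 1)) = Dop μ α i (fun j => a (j + 1)) := by
  funext j
  rcases lt_trichotomy j i with hj | hj | hj
  · rw [Dop_lt μ α (show j + 1 < i + 1 by omega), Dop_lt μ α hj]
  · subst hj; rw [Dop_eq, Dop_eq]
  · rw [Dop_gt μ α (show i + 1 < j + 1 by omega), Dop_gt μ α hj]

lemma iter_mul (hαμ : ∀ a b, α (μ a b) = μ (α a) (α b)) (k : ℕ) (x y : A) :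
    α^[k] (μ x y) = μ (α^[k] x) (α^[k] y) := by
  induction k generalizing x y with
  | zero => rfl
  | succ m ih => rw [Function.iterate_succ_apply, hαμ, ih]; rfl

end DopLemmas


def invol (p : ℕ × ℕ) : ℕ × ℕ := if p.2 < p.1 then (p.2, p.1 - 1) else (p.2 + 1, p.1)

lemma invol_lt {x y : ℕ} (h : y < x) : invol (x, y) = (y, x - 1) := if_pos h

lemma invol_ge {x y : ℕ} (h : ¬ y < x) : invol (x, y) = (y + 1, x) := if_neg h

lemma invol_invol (p : ℕ × ℕ) : invol (invol p) = p := by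
  rcases p with ⟨x, y⟩
  rcases lt_or_ge y x with h | h
  · rw [invol_lt h, invol_ge (show ¬ x - 1 < y by omega), Prod.mk.injEq]
    exact ⟨by omega, rfl⟩
  · rw [invol_ge (show ¬ y < x by omega), invol_lt (show x < y + 1 by omega), Prod.mk.injEq]
    exact ⟨rfl, by omega⟩

lemma invol_ne (p : ℕ × ℕ) : invol p ≠ p := by
  rcases p with ⟨x, y⟩
  rcases lt_or_ge y x with h | h
  · rw [invol_lt h]
    simp only [Prod.mk.injEq, ne_eq, not_and]
    intro h1; omega
  · rw [invol_ge (show ¬ y < x by omega)]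
    simp only [Prod.mk.injEq, ne_eq, not_and]
    intro h1; omega

lemma invol_mem {n : ℕ} (p : ℕ × ℕ) (hp : p ∈ Finset.range (n + 1) ×ˢ Finset.range n) :
    invol p ∈ Finset.range (n + 1) ×ˢ Finset.range n := by
  rcases p with ⟨x, y⟩
  simp only [Finset.mem_product, Finset.mem_range] at hp
  rcases lt_or_ge y x with h | h
  · rw [invol_lt h]
    simp only [Finset.mem_product, Finset.mem_range]
    exact ⟨by omega, by omega⟩
  · rw [invol_ge (show ¬ y < x by omega)]
    simp only [Finset.mem_product, Finset.mem_range]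
    exact ⟨by omega, by omega⟩

/-- Let `(A, μ, α)` be a hom-associative algebra. The Hochschild-type
coboundary operator `δ_α` on the cochain groups `C^•_α(A,A)` squares to zero. -/
theorem hdelta_hdelta_eq_zero {K A : Type*} [Field K] [AddCommGroup A] [Module K A]
    (μ : A →ₗ[K] A →ₗ[K] A) (α : A →ₗ[K] A)
    (hαμ : ∀ a b : A, α (μ a b) = μ (α a) (α b))
    (hassoc : ∀ a b c : A, μ (α a) (μ b c) = μ (μ a b) (α c))
    (n : ℕ) (hn : 1 ≤ n)
    (f : MultilinearMap K (fun _ : Fin n => A) A)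
    (hf : ∀ a : Fin n → A, α (f a) = f fun j => α (a j)) :
    ∀ a : ℕ → A,
      hdelta (fun x y => μ x y) (⇑α) (n + 1)
        (hdelta (fun x y => μ x y) (⇑α) n (toCochain n f)) a = 0 := by
  intro a
  set m : A → A → A := fun x y => μ x y with hm
  set F : (ℕ → A) → A := toCochain n f with hFdef
  have hαμ' : ∀ x y : A, α (m x y) = m (α x) (α y) := hαμ
  have hassoc' : ∀ x y z : A, m (α x) (m y z) = m (m x y) (α z) := hassoc
  have hF : ∀ b : ℕ → A, α (F b) = F fun j => α (b j) := fun b => hf _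
  have hFe : ∀ b c : ℕ → A, (∀ j, j < n → b j = c j) → F b = F c := by
    intro b c h
    simp only [hFdef, toCochain]
    exact congrArg f (funext fun j => h j j.isLt)
  have hm1 : ∀ x y z : A, m (x + y) z = m x z + m y z := by
    intro x y z; simp only [hm, map_add, LinearMap.add_apply]
  have hm2 : ∀ x y z : A, m x (y + z) = m x y + m x z := by
    intro x y z; simp only [hm, map_add]
  have hms1 : ∀ (c : ℤ) (x y : A), m (c • x) y = c • m x y := by
    intro c x y; simp only [hm, map_zsmul, LinearMap.smul_apply]
  have hms2 : ∀ (c : ℤ) (x y : A), m x (c • y) = c • m x y := by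
    intro c x y; simp only [hm, map_zsmul]
  have hmsum1 : ∀ (x : A) (s : Finset ℕ) (g : ℕ → A),
      m (∑ i ∈ s, g i) x = ∑ i ∈ s, m (g i) x := by
    intro x s g; simp only [hm, map_sum, LinearMap.sum_apply]
  have hmsum2 : ∀ (x : A) (s : Finset ℕ) (g : ℕ → A),
      m x (∑ i ∈ s, g i) = ∑ i ∈ s, m x (g i) := by
    intro x s g; simp only [hm, map_sum]
  have hiter : ∀ z : A, (⇑α)^[n - 1] (α z) = (⇑α)^[n] z := by
    intro z
    have hn1 : n - 1 + 1 = n := by omega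
    conv_rhs => rw [← hn1]
    rw [Function.iterate_succ_apply]
  have hiter' : ∀ z : A, α ((⇑α)^[n - 1] z) = (⇑α)^[n] z := by
    intro z
    have hn1 : n - 1 + 1 = n := by omega
    conv_rhs => rw [← hn1]
    rw [Function.iterate_succ_apply']
  have hd : ∀ (N : ℕ) (g : (ℕ → A) → A) (b : ℕ → A),
      hdelta m (⇑α) N g b =
        m ((⇑α)^[N - 1] (b 0)) (g fun j => b (j + 1))
          + (∑ i ∈ Finset.range N, ((-1 : ℤ) ^ (i + 1)) • g (Dop m (⇑α) i b))
          + ((-1 : ℤ) ^ (N + 1)) • m (g b) ((⇑α)^[N - 1] (b N)) := fun _ _ _ => rfl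
  rw [hd (n + 1)]
  simp only [Nat.add_sub_cancel, hd n]
  simp only [hm2, hms2, hmsum2, smul_add, Finset.smul_sum, smul_smul,
    hm1, hms1, hmsum1, Finset.sum_add_distrib]
  -- Now the goal is a sum of nine groups; we cancel them pairwise.
  have e1 : (∑ x ∈ Finset.range (n + 1), ((-1 : ℤ)) ^ (x + 1) •
        m ((⇑α)^[n - 1] (Dop m (⇑α) x a 0)) (F fun j => Dop m (⇑α) x a (j + 1)))
      = -(m ((⇑α)^[n] (a 0)) (m ((⇑α)^[n - 1] (a (0 + 1))) (F fun j => a (j + 1 + 1))))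
        - ∑ x ∈ Finset.range n, ((-1 : ℤ)) ^ (x + 1) •
            m ((⇑α)^[n] (a 0)) (F (Dop m (⇑α) x fun j => a (j + 1))) := by
    rw [Finset.sum_range_succ']
    have h0s : (fun j => Dop m (⇑α) 0 a (j + 1)) = fun j => α (a (j + 1 + 1)) := by
      funext j; exact Dop_gt m (⇑α) (Nat.succ_pos j) a
    have hA1 : m ((⇑α)^[n] (a 0)) (m ((⇑α)^[n - 1] (a (0 + 1))) (F fun j => a (j + 1 + 1)))
        = m ((⇑α)^[n - 1] (m (a 0) (a (0 + 1)))) (F fun j => α (a (j + 1 + 1))) := by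
      conv_lhs => rw [← hiter' (a 0)]
      rw [hassoc', hF, iter_mul m (⇑α) hαμ' (n - 1)]
    have hsh : ∀ x ∈ Finset.range n, ((-1 : ℤ)) ^ (x + 1 + 1) •
          m ((⇑α)^[n - 1] (Dop m (⇑α) (x + 1) a 0)) (F fun j => Dop m (⇑α) (x + 1) a (j + 1))
        = -(((-1 : ℤ)) ^ (x + 1) •
            m ((⇑α)^[n] (a 0)) (F (Dop m (⇑α) x fun j => a (j + 1)))) := by
      intro x _
      rw [Dop_lt m (⇑α) (Nat.succ_pos x) a, hiter, Dop_shift, pow_succ, mul_neg_one, neg_smul]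
    rw [Finset.sum_congr rfl hsh, Finset.sum_neg_distrib, Dop_eq m (⇑α) 0 a, h0s,
      show ((-1 : ℤ)) ^ (0 + 1) = -1 by norm_num, neg_one_smul, hA1]
    abel
  have e2 : ((-1 : ℤ)) ^ (n + 1 + 1) •
        m (m ((⇑α)^[n - 1] (a 0)) (F fun j => a (j + 1))) ((⇑α)^[n] (a (n + 1)))
      = -(((-1 : ℤ)) ^ (n + 1) •
          m ((⇑α)^[n] (a 0)) (m (F fun j => a (j + 1)) ((⇑α)^[n - 1] (a (n + 1))))) := by
    have hT : m ((⇑α)^[n] (a 0)) (m (F fun j => a (j + 1)) ((⇑α)^[n - 1] (a (n + 1))))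
        = m (m ((⇑α)^[n - 1] (a 0)) (F fun j => a (j + 1))) ((⇑α)^[n] (a (n + 1))) := by
      rw [← hiter' (a 0), hassoc', hiter']
    rw [pow_succ, mul_neg_one, neg_smul, hT]
  have e3 : (∑ x ∈ Finset.range (n + 1), (((-1 : ℤ)) ^ (x + 1) * (-1) ^ (n + 1)) •
        m (F (Dop m (⇑α) x a)) ((⇑α)^[n - 1] (Dop m (⇑α) x a n)))
      = -(∑ x ∈ Finset.range n, (((-1 : ℤ)) ^ (n + 1 + 1) * (-1) ^ (x + 1)) •
            m (F (Dop m (⇑α) x a)) ((⇑α)^[n] (a (n + 1))))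
        - (((-1 : ℤ)) ^ (n + 1 + 1) * (-1) ^ (n + 1)) •
            m (m (F a) ((⇑α)^[n - 1] (a n))) ((⇑α)^[n] (a (n + 1))) := by
    rw [Finset.sum_range_succ]
    have hterm : ∀ x ∈ Finset.range n, (((-1 : ℤ)) ^ (x + 1) * (-1) ^ (n + 1)) •
          m (F (Dop m (⇑α) x a)) ((⇑α)^[n - 1] (Dop m (⇑α) x a n))
        = -((((-1 : ℤ)) ^ (n + 1 + 1) * (-1) ^ (x + 1)) •
            m (F (Dop m (⇑α) x a)) ((⇑α)^[n] (a (n + 1)))) := by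
      intro x hx
      rw [Finset.mem_range] at hx
      rw [Dop_gt m (⇑α) hx a, hiter,
        show ((-1 : ℤ)) ^ (x + 1) * (-1) ^ (n + 1)
          = -(((-1 : ℤ)) ^ (n + 1 + 1) * (-1) ^ (x + 1)) by rw [pow_succ]; ring, neg_smul]
    have hlast : (((-1 : ℤ)) ^ (n + 1) * (-1) ^ (n + 1)) •
          m (F (Dop m (⇑α) n a)) ((⇑α)^[n - 1] (Dop m (⇑α) n a n))
        = -((((-1 : ℤ)) ^ (n + 1 + 1) * (-1) ^ (n + 1)) •
            m (m (F a) ((⇑α)^[n - 1] (a n))) ((⇑α)^[n] (a (n + 1)))) := by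
      have hFn : F (Dop m (⇑α) n a) = α (F a) :=
        (hFe _ _ fun j hj => Dop_lt m (⇑α) hj a).trans (hF a).symm
      rw [Dop_eq m (⇑α) n a, hFn, iter_mul m (⇑α) hαμ' (n - 1), hassoc', hiter',
        show ((-1 : ℤ)) ^ (n + 1) * (-1) ^ (n + 1)
          = -(((-1 : ℤ)) ^ (n + 1 + 1) * (-1) ^ (n + 1)) by rw [pow_succ (-1 : ℤ) (n + 1)]; ring,
        neg_smul]
    rw [Finset.sum_congr rfl hterm, Finset.sum_neg_distrib, hlast]
    abel
  have e4 : (∑ x ∈ Finset.range (n + 1), ∑ y ∈ Finset.range n,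
        (((-1 : ℤ)) ^ (x + 1) * (-1) ^ (y + 1)) • F (Dop m (⇑α) y (Dop m (⇑α) x a))) = 0 := by
    rw [← Finset.sum_product']
    have hcancel : ∀ p ∈ Finset.range (n + 1) ×ˢ Finset.range n,
        ((((-1 : ℤ)) ^ (p.1 + 1) * (-1) ^ (p.2 + 1)) • F (Dop m (⇑α) p.2 (Dop m (⇑α) p.1 a)))
        + ((((-1 : ℤ)) ^ ((invol p).1 + 1) * (-1) ^ ((invol p).2 + 1)) •
            F (Dop m (⇑α) (invol p).2 (Dop m (⇑α) (invol p).1 a))) = 0 := by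
      rintro ⟨x, y⟩ hp
      simp only [Finset.mem_product, Finset.mem_range] at hp
      by_cases hxy : y < x
      · rw [invol_lt hxy]
        have hc : Dop m (⇑α) (x - 1) (Dop m (⇑α) y a) = Dop m (⇑α) y (Dop m (⇑α) x a) := by
          rw [Dop_comm m (⇑α) hαμ' hassoc' (show y ≤ x - 1 by omega) a,
            show x - 1 + 1 = x by omega]
        show (((-1 : ℤ)) ^ (x + 1) * (-1) ^ (y + 1)) • F (Dop m (⇑α) y (Dop m (⇑α) x a))
          + (((-1 : ℤ)) ^ (y + 1) * (-1) ^ (x - 1 + 1)) •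
              F (Dop m (⇑α) (x - 1) (Dop m (⇑α) y a)) = 0
        rw [hc, show x - 1 + 1 = x by omega, ← add_smul,
          show ((-1 : ℤ)) ^ (x + 1) * (-1) ^ (y + 1) + (-1) ^ (y + 1) * (-1) ^ x = 0 by
            rw [pow_succ (-1 : ℤ) x]; ring, zero_smul]
      · rw [invol_ge hxy]
        have hc : Dop m (⇑α) y (Dop m (⇑α) x a) = Dop m (⇑α) x (Dop m (⇑α) (y + 1) a) :=
          Dop_comm m (⇑α) hαμ' hassoc' (by omega) a
        show (((-1 : ℤ)) ^ (x + 1) * (-1) ^ (y + 1)) • F (Dop m (⇑α) y (Dop m (⇑α) x a))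
          + (((-1 : ℤ)) ^ (y + 1 + 1) * (-1) ^ (x + 1)) •
              F (Dop m (⇑α) x (Dop m (⇑α) (y + 1) a)) = 0
        rw [hc, ← add_smul,
          show ((-1 : ℤ)) ^ (x + 1) * (-1) ^ (y + 1) + (-1) ^ (y + 1 + 1) * (-1) ^ (x + 1) = 0 by
            rw [pow_succ (-1 : ℤ) (y + 1)]; ring, zero_smul]
    exact Finset.sum_involution (fun p _ => invol p) hcancel
      (fun p _ _ => invol_ne p) (fun p hp => invol_mem p hp) (fun p hp => invol_invol p)
  rw [e1, e2, e3, e4]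
  abel
end

section
/- Let A be a vector space over a field K and α : A → A a linear map. The α-twisted circle product on C^•_α(A,A) is graded right pre-Lie: for f ∈ C^m_α(A,A), g ∈ C^n_α(A,A), h ∈ C^p_α(A,A), one has f ∘ (g ∘ h) − (f ∘ g) ∘ h = (−1)^{(n-1)(p-1)} ( f ∘ (h ∘ g) − (f ∘ h) ∘ g ). -/
section Helpers

variable {K A : Type*} [Field K] [AddCommGroup A] [Module K A]

lemma iter_comm {A : Type*} (α : A → A) (G : (ℕ → A) → A)
    (hG : ∀ x, α (G x) = G fun t => α (x t)) (e : ℕ) (x : ℕ → A) :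
    α^[e] (G x) = G fun t => α^[e] (x t) := by
  induction e generalizing x with
  | zero => simp
  | succ e ih =>
      rw [Function.iterate_succ_apply, hG, ih]
      simp [Function.iterate_succ_apply]

lemma slot_key {m : ℕ} {i : ℕ} (hi : i < m) (b : Fin m → A) (x : A) :
    (fun t : Fin m => if (t : ℕ) = i then x else b t) = Function.update b ⟨i, hi⟩ x := by
  funext t
  rcases eq_or_ne t ⟨i, hi⟩ with rfl | ht
  · simp
  · rw [Function.update_of_ne ht, if_neg fun hv => ht (Fin.ext hv)]

lemma slot_sum {m : ℕ} (f : MultilinearMap K (fun _ : Fin m => A) A) {i : ℕ} (hi : i < m)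
    (b : Fin m → A) {ι : Type*} (s : Finset ι) (v : ι → A) :
    f (fun t => if (t : ℕ) = i then ∑ j ∈ s, v j else b t)
      = ∑ j ∈ s, f fun t => if (t : ℕ) = i then v j else b t := by
  let L : A →+ A := AddMonoidHom.mk' (fun x => f (Function.update b ⟨i, hi⟩ x))
    (fun x y => by beta_reduce; rw [f.map_update_add])
  simp only [slot_key hi b]
  exact map_sum L v s

lemma slot_zsmul {m : ℕ} (f : MultilinearMap K (fun _ : Fin m => A) A) {i : ℕ} (hi : i < m)
    (b : Fin m → A) (z : ℤ) (x : A) :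
    f (fun t => if (t : ℕ) = i then z • x else b t)
      = z • f fun t => if (t : ℕ) = i then x else b t := by
  let L : A →+ A := AddMonoidHom.mk' (fun x => f (Function.update b ⟨i, hi⟩ x))
    (fun x y => by beta_reduce; rw [f.map_update_add])
  simp only [slot_key hi b]
  exact map_zsmul L z x

lemma iter_congr {A : Type*} (α : A → A) (a : ℕ → A) {e1 e2 x1 x2 : ℕ}
    (he : e1 = e2) (hx : x1 = x2) : α^[e1] (a x1) = α^[e2] (a x2) := by
  subst he; subst hx; rfl

lemma iter_iter_congr {A : Type*} (α : A → A) (a : ℕ → A) {e1 e2 e3 x y : ℕ}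
    (he : e1 + e2 = e3) (hx : x = y) : α^[e1] (α^[e2] (a x)) = α^[e3] (a y) := by
  subst hx
  rw [← he, Function.iterate_add_apply]

lemma tri_swap {M : Type*} [AddCommMonoid M] (m : ℕ) (T : ℕ → ℕ → M) :
    ∑ i ∈ Finset.range m, ∑ k ∈ Finset.range i, T k i
      = ∑ k ∈ Finset.range m, ∑ i ∈ Finset.Ico (k + 1) m, T k i := by
  simp only [Finset.range_eq_Ico]
  exact (Finset.sum_Ico_Ico_comm' 0 m T).symm

end Helpers

/-- Disjoint double-insertion shape: `H` (arity `p+1`) inserted at slot `k`, `G` (arity `n+1`)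
inserted at slot `i`, with `k < i`. -/
def dins {A : Type*} (α : A → A) (n p : ℕ) (G H : (ℕ → A) → A) (k i : ℕ) (a : ℕ → A) :
    ℕ → A :=
  fun t =>
    if t < k then α^[n + p] (a t)
    else if t = k then H fun r => α^[n] (a (k + r))
    else if t < i then α^[n + p] (a (t + p))
    else if t = i then G fun s => α^[p] (a (i + p + s))
    else α^[n + p] (a (t + n + p))

/-- Sum of disjoint double-insertion terms over the lower triangle `k < i`. -/
def dsum {A : Type*} [AddCommGroup A] (α : A → A) (m n p : ℕ) (F G H : (ℕ → A) → A)
    (a : ℕ → A) : A :=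
  ∑ i ∈ Finset.range m, ∑ k ∈ Finset.range i,
    ((-1 : ℤ) ^ (p * k + n * i)) • F (dins α n p G H k i a)

theorem master {K A : Type*} [Field K] [AddCommGroup A] [Module K A]
    (α : A → A) (m n p : ℕ)
    (f : MultilinearMap K (fun _ : Fin (m + 1) => A) A)
    (G H : (ℕ → A) → A)
    (hGα : ∀ x, α (G x) = G fun t => α (x t))
    (hHα : ∀ x, α (H x) = H fun t => α (x t))
    (hGloc : ∀ x y : ℕ → A, (∀ s, s ≤ n → x s = y s) → G x = G y)
    (a : ℕ → A) :
    circ α (m + 1) (n + p + 1) (toCochain (m + 1) f) (circ α (n + 1) (p + 1) G H) a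
      - circ α (m + n + 1) (p + 1) (circ α (m + 1) (n + 1) (toCochain (m + 1) f) G) H a
    = -(dsum α (m + 1) n p (toCochain (m + 1) f) G H a
        + ((-1 : ℤ) ^ (n * p)) • dsum α (m + 1) p n (toCochain (m + 1) f) H G a) := by
  classical
  -- the "once-composed" insertion function appearing in `(f ∘ g) ∘ h`
  set bf : ℕ → ℕ → A := fun k j =>
    if j < k then α^[p] (a j)
    else if j = k then H fun r => a (k + r)
    else α^[p] (a (j + p)) with hbf
  set c2 : ℕ → ℕ → Fin (m + 1) → A := fun k i t =>
    if (t : ℕ) < i then α^[n] (bf k t)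
    else if (t : ℕ) = i then G fun s => bf k (i + s)
    else α^[n] (bf k ((t : ℕ) + n)) with hc2
  have hA : circ α (m + n + 1) (p + 1) (circ α (m + 1) (n + 1) (toCochain (m + 1) f) G) H a
      = ∑ i ∈ Finset.range (m + 1), ∑ k ∈ Finset.range (m + n + 1),
          ((-1 : ℤ) ^ (p * k + n * i)) • f (c2 k i) := by
    simp only [circ, pcomp, toCochain, Nat.add_sub_cancel, Finset.smul_sum]
    rw [Finset.sum_comm]
    refine Finset.sum_congr rfl fun k hk => Finset.sum_congr rfl fun i hi => ?_
    rw [smul_smul, ← pow_add]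
    refine congrArg _ (congrArg f (funext fun j => ?_))
    simp only [hc2, hbf, Nat.add_lt_add_iff_right, Nat.add_right_cancel_iff,
      Nat.add_succ_sub_one]
  -- split the inner sum of hA into three ranges
  have hsplit : ∀ i ∈ Finset.range (m + 1),
      ∑ k ∈ Finset.range (m + n + 1), ((-1 : ℤ) ^ (p * k + n * i)) • f (c2 k i)
      = (∑ k ∈ Finset.range i, ((-1 : ℤ) ^ (p * k + n * i)) • f (c2 k i))
        + ((∑ j ∈ Finset.range (n + 1),
            ((-1 : ℤ) ^ (p * (i + j) + n * i)) • f (c2 (i + j) i))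
        + (∑ r ∈ Finset.range (m - i),
            ((-1 : ℤ) ^ (p * (i + n + 1 + r) + n * i)) • f (c2 (i + n + 1 + r) i))) := by
    intro i hi
    rw [Finset.mem_range] at hi
    have h1 : i ≤ i + n + 1 := by omega
    have h2 : i + n + 1 ≤ m + n + 1 := by omega
    rw [Finset.range_eq_Ico,
      ← Finset.sum_Ico_consecutive _ (Nat.zero_le (i + n + 1)) h2,
      ← Finset.sum_Ico_consecutive _ (Nat.zero_le i) h1,
      ← Finset.range_eq_Ico, add_assoc]
    have hmid : ∑ k ∈ Finset.Ico i (i + n + 1), ((-1 : ℤ) ^ (p * k + n * i)) • f (c2 k i)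
        = ∑ j ∈ Finset.range (n + 1),
            ((-1 : ℤ) ^ (p * (i + j) + n * i)) • f (c2 (i + j) i) := by
      rw [Finset.sum_Ico_eq_sum_range]
      have hcnt : i + n + 1 - i = n + 1 := by omega
      rw [hcnt]
    have hthird : ∑ k ∈ Finset.Ico (i + n + 1) (m + n + 1),
          ((-1 : ℤ) ^ (p * k + n * i)) • f (c2 k i)
        = ∑ r ∈ Finset.range (m - i),
            ((-1 : ℤ) ^ (p * (i + n + 1 + r) + n * i)) • f (c2 (i + n + 1 + r) i) := by
      rw [Finset.sum_Ico_eq_sum_range]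
      have hcnt : m + n + 1 - (i + n + 1) = m - i := by omega
      rw [hcnt]
    rw [hmid, hthird]
  have hM : circ α (m + 1) (n + p + 1) (toCochain (m + 1) f) (circ α (n + 1) (p + 1) G H) a
      = ∑ i ∈ Finset.range (m + 1), ∑ j ∈ Finset.range (n + 1),
          ((-1 : ℤ) ^ (p * (i + j) + n * i)) • f (c2 (i + j) i) := by
    have step1 : circ α (m + 1) (n + p + 1) (toCochain (m + 1) f)
          (circ α (n + 1) (p + 1) G H) a
        = ∑ i ∈ Finset.range (m + 1), ((-1 : ℤ) ^ ((n + p) * i)) •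
            f (fun t : Fin (m + 1) =>
              if (t : ℕ) + 1 < i + 1 then α^[n + p] (a t)
              else if (t : ℕ) + 1 = i + 1 then
                circ α (n + 1) (p + 1) G H fun r => a (i + r)
              else α^[n + p] (a ((t : ℕ) + (n + p)))) := rfl
    rw [step1]
    refine Finset.sum_congr rfl fun i hi => ?_
    rw [Finset.mem_range] at hi
    have hb : (fun t : Fin (m + 1) =>
          if (t : ℕ) + 1 < i + 1 then α^[n + p] (a t)
          else if (t : ℕ) + 1 = i + 1 then circ α (n + 1) (p + 1) G H fun r => a (i + r)
          else α^[n + p] (a ((t : ℕ) + (n + p))))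
        = (fun t : Fin (m + 1) =>
          if (t : ℕ) = i then circ α (n + 1) (p + 1) G H fun r => a (i + r)
          else if (t : ℕ) < i then α^[n + p] (a t)
          else α^[n + p] (a ((t : ℕ) + (n + p)))) := by
      funext t
      rcases lt_trichotomy ((t : ℕ)) i with h | h | h
      · rw [if_pos (by omega), if_neg (by omega), if_pos h]
      · rw [if_neg (by omega), if_pos (by omega), if_pos h]
      · rw [if_neg (by omega), if_neg (by omega), if_neg (by omega), if_neg (by omega)]
    rw [hb]
    have step2 : circ α (n + 1) (p + 1) G H (fun r => a (i + r))
        = ∑ j ∈ Finset.range (n + 1), ((-1 : ℤ) ^ (p * j)) •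
            pcomp α (p + 1) G H (j + 1) fun r => a (i + r) := rfl
    rw [step2, slot_sum f hi, Finset.smul_sum]
    refine Finset.sum_congr rfl fun j hj => ?_
    rw [Finset.mem_range] at hj
    rw [slot_zsmul f hi, smul_smul, ← pow_add]
    congr 1
    · congr 1
      ring
    refine congrArg f (funext fun t => ?_)
    simp only [hc2, hbf]
    rcases lt_trichotomy ((t : ℕ)) i with h | h | h
    · rw [if_neg (by omega), if_pos h, if_pos h, if_pos (by omega),
        Function.iterate_add_apply]
    · rw [if_pos h, if_neg (by omega), if_pos h]
      simp only [pcomp, Nat.add_sub_cancel, Nat.add_succ_sub_one]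
      refine congrArg G (funext fun s => ?_)
      rcases lt_trichotomy s j with hs | hs | hs
      · rw [if_pos (by omega), if_pos (by omega)]
      · rw [if_neg (by omega), if_pos (by omega), if_neg (by omega), if_pos (by omega)]
        refine congrArg H (funext fun r => ?_)
        refine congrArg a (by omega)
      · rw [if_neg (by omega), if_neg (by omega), if_neg (by omega), if_neg (by omega)]
        refine congrArg (α^[p] ∘ a) ?_
        omega
    · rw [if_neg (by omega), if_neg (by omega), if_neg (by omega), if_neg (by omega),
        if_neg (by omega), if_neg (by omega), Function.iterate_add_apply]
      refine congrArg (α^[n] ∘ α^[p] ∘ a) ?_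
      omega
  have hB : ∑ i ∈ Finset.range (m + 1), ∑ k ∈ Finset.range i,
        ((-1 : ℤ) ^ (p * k + n * i)) • f (c2 k i)
      = dsum α (m + 1) n p (toCochain (m + 1) f) G H a := by
    rw [dsum]
    refine Finset.sum_congr rfl fun i hi => Finset.sum_congr rfl fun k hk => ?_
    rw [Finset.mem_range] at hi hk
    refine congrArg _ ?_
    have hrfl : toCochain (m + 1) f (dins α n p G H k i a)
        = f fun t : Fin (m + 1) => dins α n p G H k i a ↑t := rfl
    rw [hrfl]
    refine congrArg f (funext fun t => ?_)
    simp only [hc2, hbf, dins]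
    split_ifs <;>
      first
        | rfl
        | (exfalso; omega)
        | (exact iter_iter_congr α a (by omega) (by omega))
        | (exact (iter_comm α H hHα n _).trans
            (congrArg H (funext fun r' => iter_congr α a rfl (by omega))))
        | (refine congrArg G (funext fun s => ?_)
           rw [if_neg (by omega), if_neg (by omega)]
           exact congrArg (α^[p]) (congrArg a (by omega)))
  have hC : ∑ i ∈ Finset.range (m + 1), ∑ r ∈ Finset.range (m - i),
        ((-1 : ℤ) ^ (p * (i + n + 1 + r) + n * i)) • f (c2 (i + n + 1 + r) i)
      = ((-1 : ℤ) ^ (n * p)) • dsum α (m + 1) p n (toCochain (m + 1) f) H G a := by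
    rw [dsum]
    simp only [Finset.smul_sum]
    rw [tri_swap]
    refine Finset.sum_congr rfl fun k hk => ?_
    rw [Finset.mem_range] at hk
    rw [Finset.sum_Ico_eq_sum_range]
    have hcnt : m + 1 - (k + 1) = m - k := by omega
    rw [hcnt]
    refine Finset.sum_congr rfl fun r hr => ?_
    rw [Finset.mem_range] at hr
    rw [smul_smul, ← pow_add]
    congr 1
    · congr 1
      ring
    have hrfl : toCochain (m + 1) f (dins α p n H G k (k + 1 + r) a)
        = f fun t : Fin (m + 1) => dins α p n H G k (k + 1 + r) a ↑t := rfl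
    rw [hrfl]
    refine congrArg f (funext fun t => ?_)
    simp only [hc2, hbf, dins]
    split_ifs <;>
      first
        | rfl
        | (exfalso; omega)
        | (exact iter_iter_congr α a (by omega) (by omega))
        | (exact (iter_comm α H hHα n _).trans
            (congrArg H (funext fun r' => iter_congr α a rfl (by omega))))
        | (refine hGloc _ _ fun s hs => ?_
           rw [if_pos (by omega)])
  rw [hM, hA, Finset.sum_congr rfl hsplit, Finset.sum_add_distrib, Finset.sum_add_distrib,
    hB, hC]
  abel

/-- The `α`-twisted circle product on `C^•_α(A,A)` is graded right
pre-Lie: for `f ∈ C^m_α(A,A)`, `g ∈ C^n_α(A,A)`, `h ∈ C^p_α(A,A)`,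
`f ∘ (g ∘ h) - (f ∘ g) ∘ h = (-1)^{(n-1)(p-1)} (f ∘ (h ∘ g) - (f ∘ h) ∘ g)`. -/
theorem circ_graded_pre_lie {K A : Type*} [Field K] [AddCommGroup A] [Module K A]
    (α : A →ₗ[K] A) (m n p : ℕ) (hm : 1 ≤ m) (hn : 1 ≤ n) (hp : 1 ≤ p)
    (f : MultilinearMap K (fun _ : Fin m => A) A)
    (g : MultilinearMap K (fun _ : Fin n => A) A)
    (h : MultilinearMap K (fun _ : Fin p => A) A)
    (hf : ∀ a : Fin m → A, α (f a) = f fun t => α (a t))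
    (hg : ∀ a : Fin n → A, α (g a) = g fun t => α (a t))
    (hh : ∀ a : Fin p → A, α (h a) = h fun t => α (a t)) :
    ∀ a : ℕ → A,
      circ (⇑α) m (n + p - 1) (toCochain m f) (circ (⇑α) n p (toCochain n g) (toCochain p h)) a
          - circ (⇑α) (m + n - 1) p (circ (⇑α) m n (toCochain m f) (toCochain n g)) (toCochain p h) a
        = ((-1 : ℤ) ^ ((n - 1) * (p - 1))) •
            (circ (⇑α) m (p + n - 1) (toCochain m f) (circ (⇑α) p n (toCochain p h) (toCochain n g)) a
              - circ (⇑α) (m + p - 1) n (circ (⇑α) m p (toCochain m f) (toCochain p h)) (toCochain n g) a) := by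
  intro a
  obtain ⟨m', rfl⟩ : ∃ m', m = m' + 1 := ⟨m - 1, by omega⟩
  obtain ⟨n', rfl⟩ : ∃ n', n = n' + 1 := ⟨n - 1, by omega⟩
  obtain ⟨p', rfl⟩ : ∃ p', p = p' + 1 := ⟨p - 1, by omega⟩
  have e1 : (n' + 1) + (p' + 1) - 1 = n' + p' + 1 := by omega
  have e2 : (m' + 1) + (n' + 1) - 1 = m' + n' + 1 := by omega
  have e3 : (p' + 1) + (n' + 1) - 1 = p' + n' + 1 := by omega
  have e4 : (m' + 1) + (p' + 1) - 1 = m' + p' + 1 := by omega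
  rw [e1, e2, e3, e4, Nat.add_sub_cancel, Nat.add_sub_cancel]
  have hG : ∀ x : ℕ → A, α (toCochain (n' + 1) g x)
      = toCochain (n' + 1) g fun t => α (x t) := fun x => hg fun j => x ↑j
  have hH : ∀ x : ℕ → A, α (toCochain (p' + 1) h x)
      = toCochain (p' + 1) h fun t => α (x t) := fun x => hh fun j => x ↑j
  have hGloc : ∀ x y : ℕ → A, (∀ s, s ≤ n' → x s = y s)
      → toCochain (n' + 1) g x = toCochain (n' + 1) g y :=
    fun x y hxy => congrArg g (funext fun j => hxy ↑j (by omega))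
  have hHloc : ∀ x y : ℕ → A, (∀ s, s ≤ p' → x s = y s)
      → toCochain (p' + 1) h x = toCochain (p' + 1) h y :=
    fun x y hxy => congrArg h (funext fun j => hxy ↑j (by omega))
  have H1 := master (⇑α) m' n' p' f (toCochain (n' + 1) g) (toCochain (p' + 1) h)
    hG hH hGloc a
  have H2 := master (⇑α) m' p' n' f (toCochain (p' + 1) h) (toCochain (n' + 1) g)
    hH hG hHloc a
  rw [Nat.mul_comm p' n'] at H2
  rw [H1, H2, smul_neg, smul_add, smul_smul, ← pow_add,
    show n' * p' + n' * p' = 2 * (n' * p') from by ring, pow_mul]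
  norm_num
  abel
end

section
/- Let A be a vector space over a field K and α : A → A a linear map. The bracket [f,g] = f ∘ g − (−1)^{(m-1)(n-1)} g ∘ f on C^•_α(A,A), built from the α-twisted circle product, is a degree −1 graded Lie bracket: it is graded antisymmetric, [f,g] = −(−1)^{(m-1)(n-1)}[g,f], and satisfies the graded Jacobi identity [f,[g,h]] = [[f,g],h] + (−1)^{(m-1)(n-1)}[g,[f,h]] for f ∈ C^m_α(A,A), g ∈ C^n_α(A,A), h ∈ C^p_α(A,A). -/
-- ### auxiliary defs

def bfun {A : Type*} (α : A → A) (q : ℕ) (G : (ℕ → A) → A) (j : ℕ) (a : ℕ → A) : ℕ → A :=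
  fun t => if t < j then α^[q - 1] (a t)
    else if t = j then G fun k => a (j + k)
    else α^[q - 1] (a (t + q - 1))

lemma pcomp_eq {A : Type*} (α : A → A) (q : ℕ) (F G : (ℕ → A) → A) (j : ℕ) (a : ℕ → A) :
    pcomp α q F G (j + 1) a = F (bfun α q G j a) := by
  unfold pcomp bfun
  congr 1
  funext t
  simp only [add_lt_add_iff_right, add_left_inj, Nat.add_sub_cancel]

lemma circ_eq {A : Type*} [AddCommGroup A] (α : A → A) (M q : ℕ) (F G : (ℕ → A) → A)
    (a : ℕ → A) :
    circ α M q F G a = ∑ j ∈ Finset.range M, ((-1 : ℤ) ^ ((q - 1) * j)) • F (bfun α q G j a) := by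
  unfold circ
  exact Finset.sum_congr rfl fun j _ => by rw [pcomp_eq]

lemma bfun_fin {A : Type*} (α : A → A) (M : ℕ) {m : ℕ} (G : (ℕ → A) → A) {i : ℕ}
    (hi : i < m) (a : ℕ → A) :
    (fun s : Fin m => bfun α M G i a ↑s)
      = Function.update
          (fun s : Fin m => if (s : ℕ) < i then α^[M - 1] (a s) else α^[M - 1] (a (↑s + M - 1)))
          ⟨i, hi⟩ (G fun k => a (i + k)) := by
  funext s
  rw [Function.update_apply]
  unfold bfun
  rcases eq_or_ne s ⟨i, hi⟩ with rfl | hs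
  · simp
  · have hsv : (s : ℕ) ≠ i := fun hc => hs (Fin.ext hc)
    simp only [if_neg hs, if_neg hsv]

lemma map_update_zsmul {K A : Type*} [Field K] [AddCommGroup A] [Module K A] {q : ℕ}
    (f : MultilinearMap K (fun _ : Fin q => A) A) (v : Fin q → A) (i : Fin q) (z : ℤ) (x : A) :
    f (Function.update v i (z • x)) = z • f (Function.update v i x) :=
  map_zsmul (AddMonoidHom.mk' (fun y => f (Function.update v i y))
    (fun y y' => f.map_update_add v i y y')) z x

lemma map_update_sub' {K A : Type*} [Field K] [AddCommGroup A] [Module K A] {q : ℕ}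
    (f : MultilinearMap K (fun _ : Fin q => A) A) (v : Fin q → A) (i : Fin q) (x y : A) :
    f (Function.update v i (x - y)) = f (Function.update v i x) - f (Function.update v i y) :=
  map_sub (AddMonoidHom.mk' (fun y => f (Function.update v i y))
    (fun y y' => f.map_update_add v i y y')) x y

-- iterated equivariance, raw version
lemma iterEq {A B : Type*} (α : A → A) (g : (B → A) → A)
    (hg : ∀ v : B → A, α (g v) = g fun t => α (v t)) (k : ℕ) (v : B → A) :
    α^[k] (g v) = g fun t => α^[k] (v t) := by
  induction k generalizing v with
  | zero => rfl
  | succ k ih =>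
    rw [Function.iterate_succ_apply, hg v, ih]
    simp only [← Function.iterate_succ_apply]

lemma range_split {M : Type*} [AddCommMonoid M] {i m n : ℕ} (hi : i < m) (hn : 1 ≤ n)
    (t : ℕ → M) :
    ∑ j ∈ Finset.range (m + n - 1), t j
      = ∑ j ∈ Finset.range i, t j + ∑ r ∈ Finset.range n, t (i + r)
        + ∑ w ∈ Finset.range (m - 1 - i), t (i + n + w) := by
  rw [Finset.range_eq_Ico,
    ← Finset.sum_Ico_consecutive t (Nat.zero_le (i + n)) (by omega : i + n ≤ m + n - 1),
    ← Finset.sum_Ico_consecutive t (Nat.zero_le i) (by omega : i ≤ i + n)]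
  have e1 : ∑ j ∈ Finset.Ico 0 i, t j = ∑ j ∈ Finset.range i, t j := by
    rw [← Finset.range_eq_Ico]
  have e2 : ∑ j ∈ Finset.Ico i (i + n), t j = ∑ r ∈ Finset.range n, t (i + r) := by
    rw [Finset.sum_Ico_eq_sum_range]
    have : i + n - i = n := by omega
    rw [this]
  have e3 : ∑ j ∈ Finset.Ico (i + n) (m + n - 1), t j
      = ∑ w ∈ Finset.range (m - 1 - i), t (i + n + w) := by
    rw [Finset.sum_Ico_eq_sum_range]
    have : m + n - 1 - (i + n) = m - 1 - i := by omega
    rw [this]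
  rw [e1, e2, e3]

lemma tri {M : Type*} [AddCommMonoid M] (m : ℕ) (t : ℕ → ℕ → M) :
    ∑ v ∈ Finset.range m, ∑ u ∈ Finset.range v, t u v
      = ∑ u ∈ Finset.range m, ∑ w ∈ Finset.range (m - 1 - u), t u (u + 1 + w) := by
  induction m with
  | zero => simp
  | succ m ih =>
    rw [Finset.sum_range_succ, ih, Finset.sum_range_succ]
    have h0 : ∑ w ∈ Finset.range (m + 1 - 1 - m), t m (m + 1 + w) = 0 := by
      have : m + 1 - 1 - m = 0 := by omega
      rw [this]; simp
    rw [h0, add_zero]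
    rw [← Finset.sum_add_distrib]
    apply Finset.sum_congr rfl
    intro u hu
    have hu' : u < m := Finset.mem_range.mp hu
    have h1 : m + 1 - 1 - u = (m - 1 - u) + 1 := by omega
    rw [h1, Finset.sum_range_succ]
    congr 2
    omega

def Sfun {A : Type*} (α : A → A) (n p : ℕ) (G H : (ℕ → A) → A) (u v : ℕ) (a : ℕ → A) :
    ℕ → A :=
  fun t =>
    if t < u then α^[n - 1 + (p - 1)] (a t)
    else if t = u then α^[p - 1] (G fun k => a (u + k))
    else if t < v then α^[n - 1 + (p - 1)] (a (t + (n - 1)))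
    else if t = v then α^[n - 1] (H fun k => a (v + (n - 1) + k))
    else α^[n - 1 + (p - 1)] (a (t + (n - 1) + (p - 1)))

/-- Region C (nested): inserting `H` inside the block of `G`. -/
lemma regionC {A : Type*} (α : A → A) {n p : ℕ} (hn : 1 ≤ n) (hp : 1 ≤ p)
    (G H : (ℕ → A) → A) {i r : ℕ} (hr : r < n) (a : ℕ → A) :
    bfun α n G i (bfun α p H (i + r) a)
      = bfun α (n + p - 1) (fun x => G (bfun α p H r x)) i a := by
  funext t
  simp only [bfun]
  rcases lt_trichotomy t i with h | h | h
  · have h2 : t < i + r := by omega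
    simp only [if_pos h, if_pos h2]
    rw [show n + p - 1 - 1 = n - 1 + (p - 1) from by omega, Function.iterate_add_apply]
  · simp only [if_neg (show ¬ t < i from by omega), if_pos h]
    refine congrArg G ?_
    funext k
    simp only [bfun]
    rcases lt_trichotomy k r with hk | hk | hk
    · simp only [if_pos (show i + k < i + r from by omega), if_pos hk]
    · simp only [if_neg (show ¬ i + k < i + r from by omega),
        if_pos (show i + k = i + r from by omega),
        if_neg (show ¬ k < r from by omega), if_pos hk]
      refine congrArg H ?_
      funext l
      congr 1
      omega
    · simp only [if_neg (show ¬ i + k < i + r from by omega),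
        if_neg (show ¬ i + k = i + r from by omega),
        if_neg (show ¬ k < r from by omega), if_neg (show ¬ k = r from by omega)]
      exact congrArg _ (congrArg a (by omega))
  · simp only [if_neg (show ¬ t < i from by omega), if_neg (show ¬ t = i from by omega),
      if_neg (show ¬ t + n - 1 < i + r from by omega),
      if_neg (show ¬ t + n - 1 = i + r from by omega)]
    rw [show t + (n + p - 1) - 1 = t + n - 1 + p - 1 from by omega,
      show n + p - 1 - 1 = n - 1 + (p - 1) from by omega, Function.iterate_add_apply]

/-- Region A: `H` inserted strictly to the right of the block of `G`. -/
lemma regionA {K A : Type*} [Field K] [AddCommGroup A] [Module K A] (α : A → A)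
    {n p : ℕ} (hn : 1 ≤ n) (hp : 1 ≤ p)
    (g : MultilinearMap K (fun _ : Fin n => A) A)
    (hg : ∀ v : Fin n → A, α (g v) = g fun t => α (v t))
    (H : (ℕ → A) → A) {u v : ℕ} (huv : u < v) (a : ℕ → A) :
    bfun α n (toCochain n g) u (bfun α p H (v + (n - 1)) a)
      = Sfun α n p (toCochain n g) H u v a := by
  funext t
  simp only [bfun, Sfun, toCochain]
  rcases lt_trichotomy t u with h | h | h
  · simp only [if_pos h, if_pos (show t < v + (n - 1) from by omega)]
    rw [Function.iterate_add_apply]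
  · simp only [if_neg (show ¬ t < u from by omega), if_pos h]
    rw [iterEq α (⇑g) hg (p - 1) (fun k => a (u + ↑k))]
    refine congrArg _ ?_
    funext k
    simp only [if_pos (show u + ↑k < v + (n - 1) from by have := k.isLt; omega)]
  · simp only [if_neg (show ¬ t < u from by omega), if_neg (show ¬ t = u from by omega)]
    rcases lt_trichotomy t v with h3 | h3 | h3
    · simp only [if_pos (show t + n - 1 < v + (n - 1) from by omega), if_pos h3]
      rw [show t + n - 1 = t + (n - 1) from by omega, Function.iterate_add_apply]
    · simp only [if_neg (show ¬ t + n - 1 < v + (n - 1) from by omega),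
        if_pos (show t + n - 1 = v + (n - 1) from by omega),
        if_neg (show ¬ t < v from by omega), if_pos h3]
    · simp only [if_neg (show ¬ t + n - 1 < v + (n - 1) from by omega),
        if_neg (show ¬ t + n - 1 = v + (n - 1) from by omega),
        if_neg (show ¬ t < v from by omega), if_neg (show ¬ t = v from by omega)]
      rw [show t + n - 1 + p - 1 = t + (n - 1) + (p - 1) from by omega,
        Function.iterate_add_apply]

/-- Region B: `H` inserted strictly to the left of the block of `G`. -/
lemma regionB {A : Type*} (α : A → A) {n p : ℕ} (hn : 1 ≤ n) (hp : 1 ≤ p)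
    (G H : (ℕ → A) → A) (hG : ∀ x : ℕ → A, α (G x) = G fun t => α (x t))
    {u v : ℕ} (huv : u < v) (a : ℕ → A) :
    bfun α n G v (bfun α p H u a) = Sfun α p n H G u v a := by
  funext t
  simp only [bfun, Sfun]
  rcases lt_trichotomy t u with h | h | h
  · simp only [if_pos h, if_pos (show t < v from by omega)]
    rw [show p - 1 + (n - 1) = n - 1 + (p - 1) from by omega, Function.iterate_add_apply]
  · simp only [if_pos (show t < v from by omega), if_neg (show ¬ t < u from by omega),
      if_pos h]
  · simp only [if_neg (show ¬ t < u from by omega), if_neg (show ¬ t = u from by omega)]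
    rcases lt_trichotomy t v with h3 | h3 | h3
    · simp only [if_pos h3, if_neg (show ¬ t < u from by omega),
        if_neg (show ¬ t = u from by omega)]
      rw [show t + p - 1 = t + (p - 1) from by omega,
        show p - 1 + (n - 1) = n - 1 + (p - 1) from by omega, Function.iterate_add_apply]
    · simp only [if_neg (show ¬ t < v from by omega), if_pos h3]
      have harg : (fun k => if v + k < u then α^[p - 1] (a (v + k))
          else if v + k = u then H fun k_1 => a (u + k_1)
          else α^[p - 1] (a (v + k + p - 1)))
          = fun k => α^[p - 1] (a (v + (p - 1) + k)) := by
        funext k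
        simp only [if_neg (show ¬ v + k < u from by omega),
          if_neg (show ¬ v + k = u from by omega)]
        exact congrArg _ (congrArg a (by omega))
      rw [harg]
      exact (iterEq α G hG (p - 1) fun k => a (v + (p - 1) + k)).symm
    · simp only [if_neg (show ¬ t < v from by omega), if_neg (show ¬ t = v from by omega),
        if_neg (show ¬ t + n - 1 < u from by omega),
        if_neg (show ¬ t + n - 1 = u from by omega)]
      rw [show t + n - 1 + p - 1 = t + (p - 1) + (n - 1) from by omega,
        show p - 1 + (n - 1) = n - 1 + (p - 1) from by omega, Function.iterate_add_apply,
        show t + (p - 1) + (n - 1) = t + (n - 1) + (p - 1)  from by omega]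

def Dsum {A : Type*} [AddCommGroup A] (α : A → A) (m n p : ℕ) (F G H : (ℕ → A) → A)
    (a : ℕ → A) : A :=
  ∑ u ∈ Finset.range m, ∑ w ∈ Finset.range (m - 1 - u),
    (((-1 : ℤ) ^ ((n - 1) * u + (p - 1) * (u + 1 + w + (n - 1)))) •
        F (Sfun α n p G H u (u + 1 + w) a)
      + ((-1 : ℤ) ^ ((n - 1) * (u + 1 + w) + (p - 1) * u)) •
        F (Sfun α p n H G u (u + 1 + w) a))

lemma assoc_eq {K A : Type*} [Field K] [AddCommGroup A] [Module K A] (α : A → A)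
    {m n p : ℕ} (hm : 1 ≤ m) (hn : 1 ≤ n) (hp : 1 ≤ p)
    (f : MultilinearMap K (fun _ : Fin m => A) A)
    (g : MultilinearMap K (fun _ : Fin n => A) A)
    (hg : ∀ v : Fin n → A, α (g v) = g fun t => α (v t))
    (H : (ℕ → A) → A) (a : ℕ → A) :
    circ α (m + n - 1) p (circ α m n (toCochain m f) (toCochain n g)) H a
      - circ α m (n + p - 1) (toCochain m f) (circ α n p (toCochain n g) H) a
    = Dsum α m n p (toCochain m f) (toCochain n g) H a := by
  have hGequiv : ∀ x : ℕ → A, α (toCochain n g x) = toCochain n g fun t => α (x t) :=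
    fun x => hg fun k => x ↑k
  -- step 1 : expand the first iterated circle product
  have h1 : circ α (m + n - 1) p (circ α m n (toCochain m f) (toCochain n g)) H a
      = ∑ i ∈ Finset.range m, ∑ j ∈ Finset.range (m + n - 1),
          ((-1 : ℤ) ^ ((p - 1) * j + (n - 1) * i)) •
            toCochain m f (bfun α n (toCochain n g) i (bfun α p H j a)) := by
    rw [circ_eq]
    have e : ∀ j, ((-1 : ℤ) ^ ((p - 1) * j)) •
          circ α m n (toCochain m f) (toCochain n g) (bfun α p H j a)
        = ∑ i ∈ Finset.range m, ((-1 : ℤ) ^ ((p - 1) * j + (n - 1) * i)) •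
            toCochain m f (bfun α n (toCochain n g) i (bfun α p H j a)) := by
      intro j
      rw [circ_eq, Finset.smul_sum]
      exact Finset.sum_congr rfl fun i _ => by rw [smul_smul, ← pow_add]
    rw [Finset.sum_congr rfl fun j _ => e j]
    exact Finset.sum_comm
  -- step 2 : expand the second term
  have h2 : circ α m (n + p - 1) (toCochain m f) (circ α n p (toCochain n g) H) a
      = ∑ i ∈ Finset.range m, ∑ r ∈ Finset.range n,
          ((-1 : ℤ) ^ ((n + p - 1 - 1) * i + (p - 1) * r)) •
            toCochain m f (bfun α (n + p - 1)
              (fun x => toCochain n g (bfun α p H r x)) i a) := by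
    rw [circ_eq]
    refine Finset.sum_congr rfl fun i hi => ?_
    have him : i < m := Finset.mem_range.mp hi
    have e1 : toCochain m f (bfun α (n + p - 1) (circ α n p (toCochain n g) H) i a)
        = ∑ r ∈ Finset.range n, ((-1 : ℤ) ^ ((p - 1) * r)) •
            toCochain m f (bfun α (n + p - 1)
              (fun x => toCochain n g (bfun α p H r x)) i a) := by
      show f (fun s : Fin m => bfun α (n + p - 1) (circ α n p (toCochain n g) H) i a ↑s) = _
      rw [bfun_fin α (n + p - 1) _ him]
      rw [show (circ α n p (toCochain n g) H fun k => a (i + k))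
          = ∑ r ∈ Finset.range n, ((-1 : ℤ) ^ ((p - 1) * r)) •
              toCochain n g (bfun α p H r fun k => a (i + k)) from
        circ_eq α n p (toCochain n g) H fun k => a (i + k)]
      rw [f.map_update_sum]
      refine Finset.sum_congr rfl fun r _ => ?_
      rw [map_update_zsmul]
      congr 1
      exact (congrArg f (bfun_fin α (n + p - 1)
        (fun x => toCochain n g (bfun α p H r x)) him a)).symm
    rw [e1, Finset.smul_sum]
    refine Finset.sum_congr rfl fun r _ => ?_
    rw [smul_smul, ← pow_add]
  rw [h1, h2]
  -- step 3 : split the j-sum into the three regions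
  have hsplit : ∀ i ∈ Finset.range m,
      (∑ j ∈ Finset.range (m + n - 1),
          ((-1 : ℤ) ^ ((p - 1) * j + (n - 1) * i)) •
            toCochain m f (bfun α n (toCochain n g) i (bfun α p H j a)))
      = (∑ j ∈ Finset.range i, ((-1 : ℤ) ^ ((n - 1) * i + (p - 1) * j)) •
            toCochain m f (Sfun α p n H (toCochain n g) j i a))
        + (∑ r ∈ Finset.range n,
            ((-1 : ℤ) ^ ((n + p - 1 - 1) * i + (p - 1) * r)) •
              toCochain m f (bfun α (n + p - 1)
                (fun x => toCochain n g (bfun α p H r x)) i a))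
        + (∑ w ∈ Finset.range (m - 1 - i),
            ((-1 : ℤ) ^ ((n - 1) * i + (p - 1) * (i + 1 + w + (n - 1)))) •
              toCochain m f (Sfun α n p (toCochain n g) H i (i + 1 + w) a)) := by
    intro i hi
    have him : i < m := Finset.mem_range.mp hi
    rw [range_split him hn (fun j => ((-1 : ℤ) ^ ((p - 1) * j + (n - 1) * i)) •
      toCochain m f (bfun α n (toCochain n g) i (bfun α p H j a)))]
    have eB : ∀ j ∈ Finset.range i,
        ((-1 : ℤ) ^ ((p - 1) * j + (n - 1) * i)) •
            toCochain m f (bfun α n (toCochain n g) i (bfun α p H j a))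
        = ((-1 : ℤ) ^ ((n - 1) * i + (p - 1) * j)) •
            toCochain m f (Sfun α p n H (toCochain n g) j i a) := by
      intro j hj
      have hji : j < i := Finset.mem_range.mp hj
      rw [show (p - 1) * j + (n - 1) * i = (n - 1) * i + (p - 1) * j from by ring,
        regionB α hn hp (toCochain n g) H hGequiv hji a]
    have eN : ∀ r ∈ Finset.range n,
        ((-1 : ℤ) ^ ((p - 1) * (i + r) + (n - 1) * i)) •
            toCochain m f (bfun α n (toCochain n g) i (bfun α p H (i + r) a))
        = ((-1 : ℤ) ^ ((n + p - 1 - 1) * i + (p - 1) * r)) •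
            toCochain m f (bfun α (n + p - 1)
              (fun x => toCochain n g (bfun α p H r x)) i a) := by
      intro r hr
      have hrn : r < n := Finset.mem_range.mp hr
      rw [regionC α hn hp (toCochain n g) H hrn a,
        show (p - 1) * (i + r) + (n - 1) * i = (n + p - 1 - 1) * i + (p - 1) * r from by
          rw [show n + p - 1 - 1 = (n - 1) + (p - 1) from by omega]; ring]
    have eA : ∀ w ∈ Finset.range (m - 1 - i),
        ((-1 : ℤ) ^ ((p - 1) * (i + n + w) + (n - 1) * i)) •
            toCochain m f (bfun α n (toCochain n g) i (bfun α p H (i + n + w) a))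
        = ((-1 : ℤ) ^ ((n - 1) * i + (p - 1) * (i + 1 + w + (n - 1)))) •
            toCochain m f (Sfun α n p (toCochain n g) H i (i + 1 + w) a) := by
      intro w hw
      rw [show i + n + w = i + 1 + w + (n - 1) from by omega,
        regionA α hn hp g hg H (show i < i + 1 + w from by omega) a,
        show (p - 1) * (i + 1 + w + (n - 1)) + (n - 1) * i
          = (n - 1) * i + (p - 1) * (i + 1 + w + (n - 1)) from by ring]
    rw [Finset.sum_congr rfl eB, Finset.sum_congr rfl eN, Finset.sum_congr rfl eA]
  rw [Finset.sum_congr rfl hsplit, Finset.sum_add_distrib, Finset.sum_add_distrib]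
  -- step 4 : triangle reindexing of the B-part
  rw [tri m (fun u v => ((-1 : ℤ) ^ ((n - 1) * v + (p - 1) * u)) •
    toCochain m f (Sfun α p n H (toCochain n g) u v a))]
  -- step 5 : recombine into Dsum
  have hD : Dsum α m n p (toCochain m f) (toCochain n g) H a
      = (∑ u ∈ Finset.range m, ∑ w ∈ Finset.range (m - 1 - u),
          ((-1 : ℤ) ^ ((n - 1) * u + (p - 1) * (u + 1 + w + (n - 1)))) •
            toCochain m f (Sfun α n p (toCochain n g) H u (u + 1 + w) a))
        + (∑ u ∈ Finset.range m, ∑ w ∈ Finset.range (m - 1 - u),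
          ((-1 : ℤ) ^ ((n - 1) * (u + 1 + w) + (p - 1) * u)) •
            toCochain m f (Sfun α p n H (toCochain n g) u (u + 1 + w) a)) := by
    unfold Dsum
    rw [← Finset.sum_add_distrib]
    exact Finset.sum_congr rfl fun u _ => Finset.sum_add_distrib
  rw [hD]
  abel

lemma neg1pow (e k : ℕ) : ((-1 : ℤ)) ^ (e + 2 * k) = (-1) ^ e := by
  rw [pow_add, pow_mul, neg_one_sq, one_pow, mul_one]

lemma assoc_symm {K A : Type*} [Field K] [AddCommGroup A] [Module K A] (α : A → A)
    {m n p : ℕ} (hm : 1 ≤ m) (hn : 1 ≤ n) (hp : 1 ≤ p)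
    (f : MultilinearMap K (fun _ : Fin m => A) A)
    (g : MultilinearMap K (fun _ : Fin n => A) A)
    (h : MultilinearMap K (fun _ : Fin p => A) A)
    (hg : ∀ v : Fin n → A, α (g v) = g fun t => α (v t))
    (hh : ∀ v : Fin p → A, α (h v) = h fun t => α (v t)) (a : ℕ → A) :
    circ α (m + n - 1) p (circ α m n (toCochain m f) (toCochain n g)) (toCochain p h) a
      - circ α m (n + p - 1) (toCochain m f)
          (circ α n p (toCochain n g) (toCochain p h)) a
    = ((-1 : ℤ) ^ ((n - 1) * (p - 1))) •
        (circ α (m + p - 1) n (circ α m p (toCochain m f) (toCochain p h))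
            (toCochain n g) a
          - circ α m (n + p - 1) (toCochain m f)
              (circ α p n (toCochain p h) (toCochain n g)) a) := by
  have E1 := assoc_eq α hm hn hp f g hg (toCochain p h) a
  have E2 := assoc_eq α hm hp hn f h hh (toCochain n g) a
  rw [show p + n - 1 = n + p - 1 from by omega] at E2
  rw [E1, E2]
  unfold Dsum
  rw [Finset.smul_sum]
  refine Finset.sum_congr rfl fun u _ => ?_
  rw [Finset.smul_sum]
  refine Finset.sum_congr rfl fun w _ => ?_
  rw [smul_add, smul_smul, smul_smul, ← pow_add, ← pow_add]
  rw [show (n - 1) * (p - 1) + ((p - 1) * u + (n - 1) * (u + 1 + w + (p - 1)))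
      = ((n - 1) * (u + 1 + w) + (p - 1) * u) + 2 * ((n - 1) * (p - 1)) from by ring,
    neg1pow,
    show (n - 1) * (p - 1) + ((p - 1) * (u + 1 + w) + (n - 1) * u)
      = (n - 1) * u + (p - 1) * (u + 1 + w + (n - 1)) from by ring]
  exact add_comm _ _

lemma circ_left_sub {A : Type*} [AddCommGroup A] (α : A → A) (M q : ℕ)
    (F1 F2 H : (ℕ → A) → A) (z : ℤ) (a : ℕ → A) :
    circ α M q (fun x => F1 x - z • F2 x) H a
      = circ α M q F1 H a - z • circ α M q F2 H a := by
  rw [circ_eq, circ_eq, circ_eq, Finset.smul_sum, ← Finset.sum_sub_distrib]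
  refine Finset.sum_congr rfl fun j _ => ?_
  show ((-1 : ℤ) ^ ((q - 1) * j)) • (F1 (bfun α q H j a) - z • F2 (bfun α q H j a)) = _
  rw [smul_sub, smul_comm]

lemma circ_right_sub {K A : Type*} [Field K] [AddCommGroup A] [Module K A] (α : A → A)
    {q : ℕ} (M : ℕ) (f : MultilinearMap K (fun _ : Fin q => A) A)
    (G1 G2 : (ℕ → A) → A) (z : ℤ) (a : ℕ → A) :
    circ α q M (toCochain q f) (fun x => G1 x - z • G2 x) a
      = circ α q M (toCochain q f) G1 a - z • circ α q M (toCochain q f) G2 a := by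
  rw [circ_eq, circ_eq, circ_eq, Finset.smul_sum, ← Finset.sum_sub_distrib]
  refine Finset.sum_congr rfl fun j hj => ?_
  have hjq : j < q := Finset.mem_range.mp hj
  have e : toCochain q f (bfun α M (fun x => G1 x - z • G2 x) j a)
      = toCochain q f (bfun α M G1 j a) - z • toCochain q f (bfun α M G2 j a) := by
    show f (fun s : Fin q => bfun α M (fun x => G1 x - z • G2 x) j a ↑s) = _
    rw [bfun_fin α M _ hjq]
    rw [map_update_sub' f _ _, map_update_zsmul]
    congr 1
    · exact (congrArg f (bfun_fin α M G1 hjq a)).symm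
    · congr 1
      exact (congrArg f (bfun_fin α M G2 hjq a)).symm
  rw [e, smul_sub, smul_comm]

/-- The bracket `[f,g] = f ∘ g - (-1)^{(m-1)(n-1)} g ∘ f` on
`C^•_α(A,A)`, built from the `α`-twisted circle product, is a degree `-1` graded Lie
bracket: it is graded antisymmetric, `[f,g] = -(-1)^{(m-1)(n-1)} [g,f]`, and satisfies
the graded Jacobi identity
`[f,[g,h]] = [[f,g],h] + (-1)^{(m-1)(n-1)} [g,[f,h]]`. -/
theorem brkt_graded_lie {K A : Type*} [Field K] [AddCommGroup A] [Module K A]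
    (α : A →ₗ[K] A) (m n p : ℕ) (hm : 1 ≤ m) (hn : 1 ≤ n) (hp : 1 ≤ p)
    (f : MultilinearMap K (fun _ : Fin m => A) A)
    (g : MultilinearMap K (fun _ : Fin n => A) A)
    (h : MultilinearMap K (fun _ : Fin p => A) A)
    (hf : ∀ a : Fin m → A, α (f a) = f fun t => α (a t))
    (hg : ∀ a : Fin n → A, α (g a) = g fun t => α (a t))
    (hh : ∀ a : Fin p → A, α (h a) = h fun t => α (a t)) :
    (∀ a : ℕ → A,
      brkt (⇑α) m n (toCochain m f) (toCochain n g) a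
        = -(((-1 : ℤ) ^ ((m - 1) * (n - 1))) • brkt (⇑α) n m (toCochain n g) (toCochain m f) a)) ∧
    (∀ a : ℕ → A,
      brkt (⇑α) m (n + p - 1) (toCochain m f)
          (brkt (⇑α) n p (toCochain n g) (toCochain p h)) a
        = brkt (⇑α) (m + n - 1) p (brkt (⇑α) m n (toCochain m f) (toCochain n g))
            (toCochain p h) a
          + ((-1 : ℤ) ^ ((m - 1) * (n - 1))) •
              brkt (⇑α) n (m + p - 1) (toCochain n g)
                (brkt (⇑α) m p (toCochain m f) (toCochain p h)) a) := by
  constructor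
  · intro a
    simp only [brkt]
    rw [smul_sub, smul_smul, ← pow_add,
      show (m - 1) * (n - 1) + (n - 1) * (m - 1) = 0 + 2 * ((m - 1) * (n - 1)) from by ring,
      neg1pow, pow_zero, one_smul]
    abel
  · intro a
    have A1 := assoc_symm (⇑α) hm hn hp f g h hg hh a
    have A2 := assoc_symm (⇑α) hn hm hp g f h hf hh a
    rw [show n + m - 1 = m + n - 1 from by omega] at A2
    have A3 := assoc_symm (⇑α) hp hm hn h f g hf hg a
    rw [show p + m - 1 = m + p - 1 from by omega,
      show p + n - 1 = n + p - 1 from by omega] at A3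
    simp only [show ∀ (q r : ℕ) (F G : (ℕ → A) → A), brkt (⇑α) q r F G
      = fun x => circ (⇑α) q r F G x - ((-1 : ℤ) ^ ((q - 1) * (r - 1))) • circ (⇑α) r q G F x
      from fun _ _ _ _ => rfl]
    rw [circ_right_sub (⇑α) (n + p - 1) f
        (circ (⇑α) n p (toCochain n g) (toCochain p h))
        (circ (⇑α) p n (toCochain p h) (toCochain n g)) ((-1 : ℤ) ^ ((n - 1) * (p - 1))) a,
      circ_left_sub (⇑α) (n + p - 1) m
        (circ (⇑α) n p (toCochain n g) (toCochain p h))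
        (circ (⇑α) p n (toCochain p h) (toCochain n g)) (toCochain m f)
        ((-1 : ℤ) ^ ((n - 1) * (p - 1))) a,
      circ_left_sub (⇑α) (m + n - 1) p
        (circ (⇑α) m n (toCochain m f) (toCochain n g))
        (circ (⇑α) n m (toCochain n g) (toCochain m f)) (toCochain p h)
        ((-1 : ℤ) ^ ((m - 1) * (n - 1))) a,
      circ_right_sub (⇑α) (m + n - 1) h
        (circ (⇑α) m n (toCochain m f) (toCochain n g))
        (circ (⇑α) n m (toCochain n g) (toCochain m f)) ((-1 : ℤ) ^ ((m - 1) * (n - 1))) a,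
      circ_right_sub (⇑α) (m + p - 1) g
        (circ (⇑α) m p (toCochain m f) (toCochain p h))
        (circ (⇑α) p m (toCochain p h) (toCochain m f)) ((-1 : ℤ) ^ ((m - 1) * (p - 1))) a,
      circ_left_sub (⇑α) (m + p - 1) n
        (circ (⇑α) m p (toCochain m f) (toCochain p h))
        (circ (⇑α) p m (toCochain p h) (toCochain m f)) (toCochain n g)
        ((-1 : ℤ) ^ ((m - 1) * (p - 1))) a]
    simp only [smul_sub, smul_smul, ← pow_add]
    rw [show (m - 1) * (n + p - 1 - 1) = (m - 1) * (n - 1) + (m - 1) * (p - 1) from by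
        rw [show n + p - 1 - 1 = (n - 1) + (p - 1) from by omega]; ring,
      show (m + n - 1 - 1) * (p - 1) = (m - 1) * (p - 1) + (n - 1) * (p - 1) from by
        rw [show m + n - 1 - 1 = (m - 1) + (n - 1) from by omega]; ring,
      show (n - 1) * (m + p - 1 - 1) = (m - 1) * (n - 1) + (n - 1) * (p - 1) from by
        rw [show m + p - 1 - 1 = (m - 1) + (p - 1) from by omega]; ring,
      show (m - 1) * (n - 1) + ((m - 1) * (n - 1) + (n - 1) * (p - 1))
        = (n - 1) * (p - 1) + 2 * ((m - 1) * (n - 1)) from by ring,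
      neg1pow,
      show (m - 1) * (n - 1) + ((m - 1) * (n - 1) + (n - 1) * (p - 1) + (m - 1) * (p - 1))
        = ((m - 1) * (p - 1) + (n - 1) * (p - 1)) + 2 * ((m - 1) * (n - 1)) from by ring,
      neg1pow]
    linear_combination (norm := module) (-1 : ℤ) • A1 + ((-1 : ℤ) ^ ((m - 1) * (n - 1))) • A2
      - ((-1 : ℤ) ^ ((m - 1) * (p - 1) + (n - 1) * (p - 1))) • A3
end

section
/- Let (A, μ, α) be a hom-associative algebra. The α-twisted cup product on C^•_α(A,A) is associative on cochains: for f ∈ C^m_α(A,A), g ∈ C^n_α(A,A), h ∈ C^p_α(A,A), one has (f ∪_α g) ∪_α h = f ∪_α (g ∪_α h). -/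
/-- Let `(A, μ, α)` be a hom-associative algebra. The `α`-twisted cup
product on `C^•_α(A,A)` is associative on cochains:
`(f ∪_α g) ∪_α h = f ∪_α (g ∪_α h)`. -/
theorem cup_assoc {K A : Type*} [Field K] [AddCommGroup A] [Module K A]
    (μ : A →ₗ[K] A →ₗ[K] A) (α : A →ₗ[K] A)
    (hαμ : ∀ a b : A, α (μ a b) = μ (α a) (α b))
    (hassoc : ∀ a b c : A, μ (α a) (μ b c) = μ (μ a b) (α c))
    (m n p : ℕ) (hm : 1 ≤ m) (hn : 1 ≤ n) (hp : 1 ≤ p)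
    (f : MultilinearMap K (fun _ : Fin m => A) A)
    (g : MultilinearMap K (fun _ : Fin n => A) A)
    (h : MultilinearMap K (fun _ : Fin p => A) A)
    (hf : ∀ a : Fin m → A, α (f a) = f fun t => α (a t))
    (hg : ∀ a : Fin n → A, α (g a) = g fun t => α (a t))
    (hh : ∀ a : Fin p → A, α (h a) = h fun t => α (a t)) :
    ∀ a : ℕ → A,
      cup (fun x y => μ x y) (⇑α) (m + n) p
          (cup (fun x y => μ x y) (⇑α) m n (toCochain m f) (toCochain n g)) (toCochain p h) a
        = cup (fun x y => μ x y) (⇑α) m (n + p) (toCochain m f)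
            (cup (fun x y => μ x y) (⇑α) n p (toCochain n g) (toCochain p h)) a := by
  obtain ⟨m, rfl⟩ : ∃ k, m = k + 1 := ⟨m - 1, by omega⟩
  obtain ⟨n, rfl⟩ : ∃ k, n = k + 1 := ⟨n - 1, by omega⟩
  obtain ⟨p, rfl⟩ : ∃ k, p = k + 1 := ⟨p - 1, by omega⟩
  intro a
  simp only [cup, toCochain, Nat.add_sub_cancel]
  have e1 : (f fun j : Fin (m+1) => (⇑α)^[(n+1)+(p+1)-1] (a j))
      = α (f fun j : Fin (m+1) => (⇑α)^[n+p] (a j)) := by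
    rw [hf]
    refine congrArg f (funext fun j => ?_)
    have e : n+1+(p+1)-1 = (n+p)+1 := by omega
    rw [e, Function.iterate_succ_apply']
  simp only [← Function.iterate_add_apply]
  simp only [show p+m = m+p from by omega, show n+m = m+n from by omega,
    show m+1+(n+1)-1 = m+n+1 from by omega, show n+1+(p+1)-1 = n+p+1 from by omega,
    show ∀ j:ℕ, m+1+(n+1+j) = m+1+(n+1)+j from fun j => by omega]
  simp only [Function.iterate_succ_apply']
  rw [← hf, ← hh]
  exact (hassoc _ _ _).symm
end

section
/- Let (A, μ, α) be a hom-associative algebra. The Hochschild-type coboundary δ_α is a graded derivation of the α-twisted cup product: for f ∈ C^m_α(A,A) and g ∈ C^n_α(A,A), δ_α(f ∪_α g) = (δ_α f) ∪_α g + (−1)^m f ∪_α (δ_α g). -/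
/-- Let `(A, μ, α)` be a hom-associative algebra. The Hochschild-type
coboundary `δ_α` is a graded derivation of the `α`-twisted cup product:
`δ_α (f ∪_α g) = (δ_α f) ∪_α g + (-1)^m f ∪_α (δ_α g)`. -/
theorem hdelta_cup_leibniz {K A : Type*} [Field K] [AddCommGroup A] [Module K A]
    (μ : A →ₗ[K] A →ₗ[K] A) (α : A →ₗ[K] A)
    (hαμ : ∀ a b : A, α (μ a b) = μ (α a) (α b))
    (hassoc : ∀ a b c : A, μ (α a) (μ b c) = μ (μ a b) (α c))
    (m n : ℕ) (hm : 1 ≤ m) (hn : 1 ≤ n)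
    (f : MultilinearMap K (fun _ : Fin m => A) A)
    (g : MultilinearMap K (fun _ : Fin n => A) A)
    (hf : ∀ a : Fin m → A, α (f a) = f fun t => α (a t))
    (hg : ∀ a : Fin n → A, α (g a) = g fun t => α (a t)) :
    ∀ a : ℕ → A,
      hdelta (fun x y => μ x y) (⇑α) (m + n)
          (cup (fun x y => μ x y) (⇑α) m n (toCochain m f) (toCochain n g)) a
        = cup (fun x y => μ x y) (⇑α) (m + 1) n
            (hdelta (fun x y => μ x y) (⇑α) m (toCochain m f)) (toCochain n g) a
          + ((-1 : ℤ) ^ m) •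
              cup (fun x y => μ x y) (⇑α) m (n + 1) (toCochain m f)
                (hdelta (fun x y => μ x y) (⇑α) n (toCochain n g)) a := by
  intro a
  -- iterated compatibility lemmas
  have hαμk : ∀ (k : ℕ) (x y : A), (⇑α)^[k] (μ x y) = μ ((⇑α)^[k] x) ((⇑α)^[k] y) := by
    intro k
    induction k with
    | zero => intro x y; rfl
    | succ k ih =>
      intro x y
      rw [Function.iterate_succ_apply', ih, hαμ]
      simp only [← Function.iterate_succ_apply']
  have hfk : ∀ (k : ℕ) (w : Fin m → A), (⇑α)^[k] (f w) = f (fun t => (⇑α)^[k] (w t)) := by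
    intro k
    induction k with
    | zero => intro w; rfl
    | succ k ih =>
      intro w
      rw [Function.iterate_succ_apply', ih, hf]
      simp only [← Function.iterate_succ_apply']
  have hgk : ∀ (k : ℕ) (w : Fin n → A), (⇑α)^[k] (g w) = g (fun t => (⇑α)^[k] (w t)) := by
    intro k
    induction k with
    | zero => intro w; rfl
    | succ k ih =>
      intro w
      rw [Function.iterate_succ_apply', ih, hg]
      simp only [← Function.iterate_succ_apply']
  have hind : ∀ (p q i i' : ℕ), p = q → i = i' → (⇑α)^[p] (a i) = (⇑α)^[q] (a i') := by
    rintro p q i i' rfl rfl; rfl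
  simp only [hdelta, cup, toCochain]
  simp only [map_add, map_sum, map_zsmul, LinearMap.add_apply, LinearMap.smul_apply,
    Finset.sum_apply, LinearMap.coe_sum, Nat.add_sub_cancel, Nat.add_zero]
  rw [Finset.sum_range_add]
  have hsucc : ∀ (k : ℕ) (x : A), α ((⇑α)^[k] x) = (⇑α)^[k + 1] x := by
    intro k x
    exact (Function.iterate_succ_apply' (⇑α) k x).symm
  -- Term matching `μ(α^{m+n-1} a₀, (f∪g)(a₊))` with the first term of `(δf) ∪ g`.
  have h1 : (μ ((⇑α)^[m + n - 1] (a 0)))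
        ((μ (f fun j : Fin m => (⇑α)^[n - 1] (a (↑j + 1))))
          (g fun j : Fin n => (⇑α)^[m - 1] (a (m + ↑j + 1))))
      = (μ ((μ ((⇑α)^[m - 1] ((⇑α)^[n - 1] (a 0)))) (f fun j : Fin m => (⇑α)^[n - 1] (a (↑j + 1)))))
          (g fun j : Fin n => (⇑α)^[m] (a (m + 1 + ↑j))) := by
    have e0 : (⇑α)^[m + n - 1] (a 0) = α ((⇑α)^[m - 1] ((⇑α)^[n - 1] (a 0))) := by
      rw [← Function.iterate_add_apply, hsucc]
      exact hind _ _ _ _ (by omega) rfl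
    rw [e0, hassoc]
    refine congrArg₂ (fun x y => (μ x) y) rfl ?_
    rw [hg]
    exact congrArg _ (funext fun t => by
      rw [hsucc]; exact hind _ _ _ _ (by omega) (by omega))
  -- The first `m` interior terms.
  have hS1 : ∀ i ∈ Finset.range m,
      (-1 : ℤ) ^ (i + 1) •
        (μ (f fun j : Fin m => (⇑α)^[n - 1]
            (if ↑j < i then α (a ↑j) else if ↑j = i then (μ (a i)) (a (i + 1)) else α (a (↑j + 1)))))
          (g fun j : Fin n => (⇑α)^[m - 1]
            (if m + ↑j < i then α (a (m + ↑j))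
              else if m + ↑j = i then (μ (a i)) (a (i + 1)) else α (a (m + ↑j + 1))))
      = (-1 : ℤ) ^ (i + 1) •
        (μ (f fun j : Fin m =>
            if ↑j < i then α ((⇑α)^[n - 1] (a ↑j))
            else if ↑j = i then (μ ((⇑α)^[n - 1] (a i))) ((⇑α)^[n - 1] (a (i + 1)))
            else α ((⇑α)^[n - 1] (a (↑j + 1)))))
          (g fun j : Fin n => (⇑α)^[m] (a (m + 1 + ↑j))) := by
    intro i hi
    rw [Finset.mem_range] at hi
    refine congrArg₂ (fun (c : ℤ) (x : A) => c • x) rfl ?_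
    refine congrArg₂ (fun x y => (μ x) y) (congrArg _ (funext fun j => ?_))
      (congrArg _ (funext fun j => ?_))
    · by_cases h1 : (↑j : ℕ) < i
      · rw [if_pos h1, if_pos h1, ← Function.iterate_succ_apply, hsucc]
      · by_cases h2 : (↑j : ℕ) = i
        · rw [if_neg h1, if_neg h1, if_pos h2, if_pos h2, hαμk]
        · rw [if_neg h1, if_neg h1, if_neg h2, if_neg h2, ← Function.iterate_succ_apply, hsucc]
    · rw [if_neg (by omega), if_neg (by omega), ← Function.iterate_succ_apply]
      exact hind _ _ _ _ (by omega) (by omega)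
  -- The last `n` interior terms.
  have hS2 : ∀ i ∈ Finset.range n,
      (-1 : ℤ) ^ (m + i + 1) •
        (μ (f fun j : Fin m => (⇑α)^[n - 1]
            (if ↑j < m + i then α (a ↑j)
              else if ↑j = m + i then (μ (a (m + i))) (a (m + i + 1)) else α (a (↑j + 1)))))
          (g fun j : Fin n => (⇑α)^[m - 1]
            (if m + ↑j < m + i then α (a (m + ↑j))
              else if m + ↑j = m + i then (μ (a (m + i))) (a (m + i + 1)) else α (a (m + ↑j + 1))))
      = (-1 : ℤ) ^ m •
        ((-1 : ℤ) ^ (i + 1) •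
          (μ (f fun j : Fin m => (⇑α)^[n] (a ↑j)))
            (g fun j : Fin n =>
              if ↑j < i then α ((⇑α)^[m - 1] (a (m + ↑j)))
              else if ↑j = i then (μ ((⇑α)^[m - 1] (a (m + i)))) ((⇑α)^[m - 1] (a (m + (i + 1))))
              else α ((⇑α)^[m - 1] (a (m + (↑j + 1)))))) := by
    intro i hi
    rw [Finset.mem_range] at hi
    rw [smul_smul, ← pow_add]
    refine congrArg₂ (fun (c : ℤ) (x : A) => c • x) rfl ?_
    refine congrArg₂ (fun x y => (μ x) y) (congrArg _ (funext fun j => ?_))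
      (congrArg _ (funext fun j => ?_))
    · have hj := j.isLt
      rw [if_pos (by omega : (↑j : ℕ) < m + i), ← Function.iterate_succ_apply]
      exact hind _ _ _ _ (by omega) rfl
    · by_cases hj1 : (↑j : ℕ) < i
      · rw [if_pos (show m + (↑j : ℕ) < m + i by omega), if_pos hj1,
          ← Function.iterate_succ_apply, hsucc]
      · by_cases hj2 : (↑j : ℕ) = i
        · rw [if_neg (show ¬(m + (↑j : ℕ) < m + i) by omega), if_neg hj1,
            if_pos (show m + (↑j : ℕ) = m + i by omega), if_pos hj2, hαμk]
          exact congrArg₂ (fun x y => (μ x) y) (hind _ _ _ _ rfl (by omega))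
            (hind _ _ _ _ rfl (by omega))
        · rw [if_neg (show ¬(m + (↑j : ℕ) < m + i) by omega), if_neg hj1,
            if_neg (show ¬(m + (↑j : ℕ) = m + i) by omega), if_neg hj2,
            ← Function.iterate_succ_apply, hsucc]
          exact hind _ _ _ _ rfl (by omega)
  -- The last term matches the last term of `(-1)^m f ∪ (δg)`.
  have hT3 : (-1 : ℤ) ^ (m + n + 1) •
        (μ ((μ (f fun j : Fin m => (⇑α)^[n - 1] (a ↑j))) (g fun j : Fin n => (⇑α)^[m - 1] (a (m + ↑j)))))
          ((⇑α)^[m + n - 1] (a (m + n)))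
      = (-1 : ℤ) ^ m • ((-1 : ℤ) ^ (n + 1) •
          (μ (f fun j : Fin m => (⇑α)^[n] (a ↑j)))
            ((μ (g fun j : Fin n => (⇑α)^[m - 1] (a (m + ↑j)))) ((⇑α)^[n - 1] ((⇑α)^[m - 1] (a (m + n)))))) := by
    rw [smul_smul, ← pow_add]
    refine congrArg₂ (fun (c : ℤ) (x : A) => c • x) rfl ?_
    have ef : (f fun j : Fin m => (⇑α)^[n] (a ↑j)) = α (f fun j : Fin m => (⇑α)^[n - 1] (a ↑j)) := by
      rw [hf]
      exact (congrArg _ (funext fun t => by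
        rw [hsucc]; exact hind _ _ _ _ (by omega) rfl)).symm
    rw [ef, hassoc]
    refine congrArg₂ (fun x y => (μ x) y) rfl ?_
    rw [← Function.iterate_add_apply, hsucc]
    exact hind _ _ _ _ (by omega) rfl
  -- The two remaining boundary terms cancel.
  have hB2 : (-1 : ℤ) ^ (m + 1) •
        (μ ((μ (f fun j : Fin m => (⇑α)^[n - 1] (a ↑j))) ((⇑α)^[m - 1] ((⇑α)^[n - 1] (a m)))))
          (g fun j : Fin n => (⇑α)^[m] (a (m + 1 + ↑j)))
      = - ((-1 : ℤ) ^ m •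
          (μ (f fun j : Fin m => (⇑α)^[n] (a ↑j)))
            ((μ ((⇑α)^[n - 1] ((⇑α)^[m - 1] (a m)))) (g fun j : Fin n => (⇑α)^[m - 1] (a (m + (↑j + 1)))))) := by
    rw [pow_succ, mul_comm, neg_one_mul, neg_smul, neg_inj]
    refine congrArg₂ (fun (c : ℤ) (x : A) => c • x) rfl ?_
    have ef : (f fun j : Fin m => (⇑α)^[n] (a ↑j)) = α (f fun j : Fin m => (⇑α)^[n - 1] (a ↑j)) := by
      rw [hf]
      exact (congrArg _ (funext fun t => by
        rw [hsucc]; exact hind _ _ _ _ (by omega) rfl)).symm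
    rw [ef, hassoc]
    refine congrArg₂ (fun x y => (μ x) y) ?_ ?_
    · refine congrArg₂ (fun x y => (μ x) y) rfl ?_
      rw [← Function.iterate_add_apply, ← Function.iterate_add_apply]
      exact hind _ _ _ _ (by omega) rfl
    · rw [hg]
      exact congrArg _ (funext fun t => by
        rw [hsucc]; exact hind _ _ _ _ (by omega) (by omega))
  rw [h1, Finset.sum_congr rfl hS1, Finset.sum_congr rfl hS2, hT3, hB2, ← Finset.smul_sum,
    smul_add, smul_add]
  abel
end

section
/- Let (A, μ, α) be a hom-associative algebra. The α-twisted cup product is graded commutative up to coboundary: if f ∈ C^m_α(A,A) and g ∈ C^n_α(A,A) are cocycles (δ_α f = 0 and δ_α g = 0), then f ∪_α g − (−1)^{mn} g ∪_α f lies in the image of δ_α : C^{m+n-1}_α(A,A) → C^{m+n}_α(A,A). -/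
set_option linter.unusedSectionVars false
set_option linter.unnecessarySimpa false
set_option linter.unusedVariables false

namespace CupAux

open Finset Function

variable {K A : Type*} [Field K] [AddCommGroup A] [Module K A]

/-! ### sequence combinators -/

def Dseq {A : Type*} (μ : A → A → A) (α : A → A) (k : ℕ) (a : ℕ → A) : ℕ → A :=
  fun j => if j < k then α (a j) else if j = k then μ (a k) (a (k + 1)) else α (a (j + 1))

def shf {A : Type*} (a : ℕ → A) : ℕ → A := fun j => a (j + 1)

def ins {A : Type*} (v : ℕ → A) (i : ℕ) (x : A) : ℕ → A := fun j => if j = i then x else v j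

def cseq {A : Type*} (α : A → A) (n : ℕ) (G : (ℕ → A) → A) (i : ℕ) (a : ℕ → A) : ℕ → A :=
  fun j => if j + 1 < i + 1 then α^[n - 1] (a j)
    else if j + 1 = i + 1 then G (fun k => a (i + 1 - 1 + k))
    else α^[n - 1] (a (j + n - 1))

def vQ {A : Type*} [AddCommGroup A] (α : A → A) (n : ℕ) (i : ℕ) (a : ℕ → A) : ℕ → A :=
  fun j => if j + 1 < i + 1 then α^[n] (a j) else if j + 1 = i + 1 then 0 else α^[n] (a (j + n))

/-- definitional unfolding checks -/
theorem pcomp_eq {A : Type*} (α : A → A) (n : ℕ) (F G : (ℕ → A) → A) (i : ℕ) (a : ℕ → A) :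
    pcomp α n F G (i + 1) a = F (cseq α n G i a) := rfl

theorem hdelta_eq (μ : A → A → A) (α : A → A) (p : ℕ) (F : (ℕ → A) → A) (a : ℕ → A) :
    hdelta μ α p F a =
      μ (α^[p - 1] (a 0)) (F (shf a))
        + ∑ i ∈ Finset.range p, ((-1 : ℤ) ^ (i + 1)) • F (Dseq μ α i a)
        + ((-1 : ℤ) ^ (p + 1)) • μ (F a) (α^[p - 1] (a p)) := rfl

theorem circ_eq (α : A → A) (m n : ℕ) (F G : (ℕ → A) → A) (a : ℕ → A) :
    circ α m n F G a
      = ∑ i ∈ Finset.range m, ((-1 : ℤ) ^ ((n - 1) * i)) • F (cseq α n G i a) := rfl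

/-! ### sign lemmas -/

theorem sgn_shift (a b : ℕ) : ((-1 : ℤ)) ^ (a + 2 * b) = (-1) ^ a := by
  rw [pow_add, pow_mul]; norm_num

theorem sgn_succ_smul (e : ℕ) (x : A) : ((-1 : ℤ) ^ (e + 1)) • x = -(((-1 : ℤ) ^ e) • x) := by
  rw [pow_succ, mul_comm, mul_smul, neg_one_zsmul]

/-! ### sum lemmas -/

theorem sum_range_add' (φ : ℕ → A) (p d : ℕ) :
    ∑ k ∈ range (p + d), φ k = ∑ k ∈ range p, φ k + ∑ t ∈ range d, φ (p + t) := by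
  induction d with
  | zero => simp
  | succ d ih =>
      rw [show p + (d + 1) = (p + d) + 1 from rfl, sum_range_succ, ih, sum_range_succ, add_assoc]

theorem sum_range_split (φ : ℕ → A) {p q : ℕ} (h : p ≤ q) :
    ∑ k ∈ range q, φ k = ∑ k ∈ range p, φ k + ∑ t ∈ range (q - p), φ (p + t) := by
  obtain ⟨d, rfl⟩ := Nat.exists_eq_add_of_le h
  rw [Nat.add_sub_cancel_left]
  exact sum_range_add' φ p d

/-! ### toCochain slot machinery -/

theorem tc_congr {m : ℕ} (f : MultilinearMap K (fun _ : Fin m => A) A) {b b' : ℕ → A}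
    (h : ∀ j, j < m → b j = b' j) : toCochain m f b = toCochain m f b' := by
  unfold toCochain; congr 1; funext j; exact h j j.2

theorem tc_ins_update {m : ℕ} (f : MultilinearMap K (fun _ : Fin m => A) A)
    (v : ℕ → A) (i : ℕ) (hi : i < m) (x : A) :
    toCochain m f (ins v i x) = f (Function.update (fun j : Fin m => v j) ⟨i, hi⟩ x) := by
  unfold toCochain ins
  congr 1; funext j
  by_cases h : (j : ℕ) = i
  · have hj : j = ⟨i, hi⟩ := Fin.ext h
    subst hj; simp
  · rw [Function.update_of_ne (by simpa [Fin.ext_iff] using h)]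
    simp [h]

theorem tc_ins_add {m : ℕ} (f : MultilinearMap K (fun _ : Fin m => A) A)
    (v : ℕ → A) (i : ℕ) (hi : i < m) (x y : A) :
    toCochain m f (ins v i (x + y)) = toCochain m f (ins v i x) + toCochain m f (ins v i y) := by
  rw [tc_ins_update f v i hi, tc_ins_update f v i hi, tc_ins_update f v i hi,
    MultilinearMap.map_update_add]

theorem tc_ins_smul {m : ℕ} (f : MultilinearMap K (fun _ : Fin m => A) A)
    (v : ℕ → A) (i : ℕ) (hi : i < m) (c : K) (x : A) :
    toCochain m f (ins v i (c • x)) = c • toCochain m f (ins v i x) := by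
  rw [tc_ins_update f v i hi, tc_ins_update f v i hi, MultilinearMap.map_update_smul]

def tcHom {m : ℕ} (f : MultilinearMap K (fun _ : Fin m => A) A)
    (v : ℕ → A) (i : ℕ) (hi : i < m) : A →+ A :=
  AddMonoidHom.mk' (fun x => toCochain m f (ins v i x)) (tc_ins_add f v i hi)

theorem tc_ins_zsmul {m : ℕ} (f : MultilinearMap K (fun _ : Fin m => A) A)
    (v : ℕ → A) (i : ℕ) (hi : i < m) (z : ℤ) (x : A) :
    toCochain m f (ins v i (z • x)) = z • toCochain m f (ins v i x) := by
  exact map_zsmul (tcHom f v i hi) z x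

theorem tc_ins_sum {m : ℕ} (f : MultilinearMap K (fun _ : Fin m => A) A)
    (v : ℕ → A) (i : ℕ) (hi : i < m) {ι : Type*} (s : Finset ι) (φ : ι → A) :
    toCochain m f (ins v i (∑ k ∈ s, φ k)) = ∑ k ∈ s, toCochain m f (ins v i (φ k)) := by
  exact map_sum (tcHom f v i hi) φ s

theorem tc_ins_zero {m : ℕ} (f : MultilinearMap K (fun _ : Fin m => A) A)
    (v : ℕ → A) (i : ℕ) (hi : i < m) :
    toCochain m f (ins v i (0 : A)) = 0 := by
  exact map_zero (tcHom f v i hi)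

/-! ### iterate lemmas -/

theorem it_swap (α : A → A) (p : ℕ) (x : A) : α^[p] (α x) = α (α^[p] x) := by
  rw [← Function.iterate_succ_apply, Function.iterate_succ_apply']

theorem it_mul {μ : A → A → A} {α : A → A} (hαμ : ∀ a b, α (μ a b) = μ (α a) (α b))
    (p : ℕ) (x y : A) : α^[p] (μ x y) = μ (α^[p] x) (α^[p] y) := by
  induction p with
  | zero => rfl
  | succ p ih =>
      rw [Function.iterate_succ_apply', ih, hαμ, Function.iterate_succ_apply',
        Function.iterate_succ_apply']

theorem it_equiv {α : A → A} {F : (ℕ → A) → A}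
    (hF : ∀ b : ℕ → A, α (F b) = F (fun j => α (b j))) (p : ℕ) (b : ℕ → A) :
    α^[p] (F b) = F (fun j => α^[p] (b j)) := by
  induction p with
  | zero => rfl
  | succ p ih =>
      rw [Function.iterate_succ_apply', ih, hF]
      congr 1; funext j; rw [Function.iterate_succ_apply']

theorem it_addhom (α : A →+ A) (p : ℕ) (x y : A) :
    (⇑α)^[p] (x + y) = (⇑α)^[p] x + (⇑α)^[p] y := by
  induction p with
  | zero => rfl
  | succ p ih => rw [Function.iterate_succ_apply', ih, map_add,
      Function.iterate_succ_apply', Function.iterate_succ_apply']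

theorem it_lin (α : A →ₗ[K] A) (p : ℕ) (c : K) (x : A) :
    (⇑α)^[p] (c • x) = c • (⇑α)^[p] x := by
  induction p with
  | zero => rfl
  | succ p ih => rw [Function.iterate_succ_apply', ih, map_smul,
      Function.iterate_succ_apply']

/-! ### bilinearity of μ -/

theorem muR_zsmul (μ : A →ₗ[K] A →ₗ[K] A) (x : A) (z : ℤ) (y : A) :
    μ x (z • y) = z • μ x y := map_zsmul (μ x) z y

theorem muR_sum (μ : A →ₗ[K] A →ₗ[K] A) (x : A) {ι : Type*} (s : Finset ι) (φ : ι → A) :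
    μ x (∑ k ∈ s, φ k) = ∑ k ∈ s, μ x (φ k) := map_sum (μ x) φ s

theorem muL_zsmul (μ : A →ₗ[K] A →ₗ[K] A) (z : ℤ) (x y : A) :
    μ (z • x) y = z • μ x y := by
  have := map_zsmul (μ.flip y) z x
  simpa using this

theorem muL_sum (μ : A →ₗ[K] A →ₗ[K] A) {ι : Type*} (s : Finset ι) (φ : ι → A) (y : A) :
    μ (∑ k ∈ s, φ k) y = ∑ k ∈ s, μ (φ k) y := by
  have := map_sum (μ.flip y) φ s
  simpa using this

end CupAux

namespace CupAux
open Finset Function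
section Vals
variable {A : Type*}

theorem shf_app (a : ℕ → A) (j : ℕ) : shf a j = a (j + 1) := rfl

theorem ins_self (v : ℕ → A) (i : ℕ) (x : A) : ins v i x i = x := by simp [ins]

theorem ins_ne (v : ℕ → A) (i : ℕ) (x : A) {j : ℕ} (h : j ≠ i) : ins v i x j = v j := by
  simp [ins, h]

theorem cseq_lt (α : A → A) (n : ℕ) (G : (ℕ → A) → A) (i : ℕ) (a : ℕ → A) {j : ℕ}
    (h : j < i) : cseq α n G i a j = α^[n - 1] (a j) := by
  simp only [cseq]
  rw [if_pos (show j + 1 < i + 1 by omega)]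

theorem cseq_eq (α : A → A) (n : ℕ) (G : (ℕ → A) → A) (i : ℕ) (a : ℕ → A) :
    cseq α n G i a i = G (fun k => a (i + k)) := by
  simp only [cseq]
  rw [if_neg (show ¬(i + 1 < i + 1) by omega)]
  simp

theorem cseq_gt (α : A → A) (n : ℕ) (G : (ℕ → A) → A) (i : ℕ) (a : ℕ → A) {j : ℕ}
    (h : i < j) : cseq α n G i a j = α^[n - 1] (a (j + n - 1)) := by
  simp only [cseq]
  rw [if_neg (show ¬(j + 1 < i + 1) by omega), if_neg (show ¬(j + 1 = i + 1) by omega)]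

theorem Dseq_lt (μ : A → A → A) (α : A → A) (k : ℕ) (a : ℕ → A) {j : ℕ} (h : j < k) :
    Dseq μ α k a j = α (a j) := by
  simp only [Dseq]
  rw [if_pos h]

theorem Dseq_eq (μ : A → A → A) (α : A → A) (k : ℕ) (a : ℕ → A) :
    Dseq μ α k a k = μ (a k) (a (k + 1)) := by
  simp only [Dseq]
  rw [if_neg (lt_irrefl k)]
  simp

theorem Dseq_gt (μ : A → A → A) (α : A → A) (k : ℕ) (a : ℕ → A) {j : ℕ} (h : k < j) :
    Dseq μ α k a j = α (a (j + 1)) := by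
  simp only [Dseq]
  rw [if_neg (show ¬(j < k) by omega), if_neg (show ¬(j = k) by omega)]

end Vals

section Vals2
variable {A : Type*} [AddCommGroup A]

theorem vQ_lt (α : A → A) (n : ℕ) (i : ℕ) (a : ℕ → A) {j : ℕ} (h : j < i) :
    vQ α n i a j = α^[n] (a j) := by
  simp only [vQ]
  rw [if_pos (show j + 1 < i + 1 by omega)]

theorem vQ_gt (α : A → A) (n : ℕ) (i : ℕ) (a : ℕ → A) {j : ℕ} (h : i < j) :
    vQ α n i a j = α^[n] (a (j + n)) := by
  simp only [vQ]
  rw [if_neg (show ¬(j + 1 < i + 1) by omega), if_neg (show ¬(j + 1 = i + 1) by omega)]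

end Vals2
end CupAux

namespace CupAux
open Finset Function
section Atoms

variable {K A : Type*} [Field K] [AddCommGroup A] [Module K A]
variable (μ : A →ₗ[K] A →ₗ[K] A) (α : A →ₗ[K] A) {m n : ℕ}
variable (f : MultilinearMap K (fun _ : Fin m => A) A)
variable (g : MultilinearMap K (fun _ : Fin n => A) A)

theorem hf' (hf : ∀ v : Fin m → A, α (f v) = f fun t => α (v t)) :
    ∀ b : ℕ → A, α (toCochain m f b) = toCochain m f (fun j => α (b j)) := fun _ => hf _

theorem it_pred (α : A → A) {n : ℕ} (hn : 1 ≤ n) (x : A) :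
    α^[n] x = α (α^[n - 1] x) := by
  conv_lhs => rw [show n = (n - 1) + 1 by omega]
  rw [Function.iterate_succ_apply']

theorem it_pred' (α : A → A) {n : ℕ} (hn : 1 ≤ n) (x : A) :
    α^[n] x = α^[n - 1] (α x) := by
  conv_lhs => rw [show n = (n - 1) + 1 by omega]
  rw [Function.iterate_succ_apply]

/-- congruence for pcomp: only the first m+n-1 entries matter -/
theorem pc_congr (hn : 1 ≤ n) {i : ℕ} (hi : i < m) {b b' : ℕ → A}
    (h : ∀ j, j < m + n - 1 → b j = b' j) :
    pcomp (⇑α) n (toCochain m f) (toCochain n g) (i + 1) b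
      = pcomp (⇑α) n (toCochain m f) (toCochain n g) (i + 1) b' := by
  rw [pcomp_eq, pcomp_eq]
  apply tc_congr
  intro j hj
  rcases Nat.lt_trichotomy j i with hc | hc | hc
  · rw [cseq_lt _ _ _ _ _ hc, cseq_lt _ _ _ _ _ hc, h j (by omega)]
  · subst hc
    rw [cseq_eq, cseq_eq]
    apply tc_congr
    intro k hk
    rw [h (j + k) (by omega)]
  · rw [cseq_gt _ _ _ _ _ hc, cseq_gt _ _ _ _ _ hc, h (j + n - 1) (by omega)]

/-- equivariance of pcomp -/
theorem pc_equiv (hf : ∀ v : Fin m → A, α (f v) = f fun t => α (v t))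
    (hg : ∀ v : Fin n → A, α (g v) = g fun t => α (v t)) (i : ℕ) (b : ℕ → A) :
    α (pcomp (⇑α) n (toCochain m f) (toCochain n g) (i + 1) b)
      = pcomp (⇑α) n (toCochain m f) (toCochain n g) (i + 1) (fun j => α (b j)) := by
  rw [pcomp_eq, pcomp_eq, hf' α f hf]
  apply tc_congr
  intro j hj
  rcases Nat.lt_trichotomy j i with hc | hc | hc
  · rw [cseq_lt _ _ _ _ _ hc, cseq_lt _ _ _ _ _ hc, it_swap]
  · subst hc
    rw [cseq_eq, cseq_eq, hf' α g hg]
  · rw [cseq_gt _ _ _ _ _ hc, cseq_gt _ _ _ _ _ hc, it_swap]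

theorem E1 (hm : 1 ≤ m) (hn : 1 ≤ n) (i : ℕ) (a : ℕ → A) :
    μ ((⇑α)^[m - 1] (cseq (⇑α) n (toCochain n g) (i + 1) a 0))
        (toCochain m f (shf (cseq (⇑α) n (toCochain n g) (i + 1) a)))
      = μ ((⇑α)^[m + n - 2] (a 0))
          (pcomp (⇑α) n (toCochain m f) (toCochain n g) (i + 1) (shf a)) := by
  rw [pcomp_eq]
  congr 1
  · rw [cseq_lt _ _ _ _ _ (by omega), ← Function.iterate_add_apply,
      show m - 1 + (n - 1) = m + n - 2 by omega]
  · apply tc_congr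
    intro j hj
    rw [shf_app]
    rcases Nat.lt_trichotomy j i with hc | hc | hc
    · rw [cseq_lt _ _ _ _ _ (by omega), cseq_lt _ _ _ _ _ hc, shf_app]
    · subst hc
      rw [cseq_eq, cseq_eq]
      apply tc_congr
      intro k hk
      rw [shf_app, show j + 1 + k = j + k + 1 by omega]
    · rw [cseq_gt _ _ _ _ _ (by omega), cseq_gt _ _ _ _ _ hc, shf_app,
        show j + 1 + n - 1 = j + n - 1 + 1 by omega]

theorem E2 (hm : 1 ≤ m) (hn : 1 ≤ n)
    (hg : ∀ v : Fin n → A, α (g v) = g fun t => α (v t)) (a : ℕ → A) :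
    μ ((⇑α)^[m - 1] (cseq (⇑α) n (toCochain n g) 0 a 0))
        (toCochain m f (shf (cseq (⇑α) n (toCochain n g) 0 a)))
      = cup (fun x y => μ x y) (⇑α) n m (toCochain n g) (toCochain m f) a := by
  unfold cup
  have h1 : (⇑α)^[m - 1] (cseq (⇑α) n (toCochain n g) 0 a 0)
      = toCochain n g (fun j => (⇑α)^[m - 1] (a j)) := by
    rw [cseq_eq, it_equiv (hf' α g hg)]
    apply tc_congr
    intro k hk
    rw [show 0 + k = k from by omega]
  have h2 : toCochain m f (shf (cseq (⇑α) n (toCochain n g) 0 a))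
      = toCochain m f (fun j => (⇑α)^[n - 1] (a (n + j))) := by
    apply tc_congr
    intro j hj
    rw [shf_app, cseq_gt _ _ _ _ _ (by omega), show j + 1 + n - 1 = n + j by omega]
  rw [h1, h2]

theorem E3 (hn : 1 ≤ n) {i : ℕ} (hi : i < m) (a : ℕ → A) :
    μ (toCochain m f (cseq (⇑α) n (toCochain n g) i a))
        ((⇑α)^[m - 1] (cseq (⇑α) n (toCochain n g) i a m))
      = μ (pcomp (⇑α) n (toCochain m f) (toCochain n g) (i + 1) a)
          ((⇑α)^[m + n - 2] (a (m + n - 1))) := by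
  rw [pcomp_eq]
  congr 1
  rw [cseq_gt _ _ _ _ _ hi, ← Function.iterate_add_apply,
    show m - 1 + (n - 1) = m + n - 2 by omega, show m + n - 1 = m + n - 1 from rfl]

theorem E4 (hm : 1 ≤ m) (hn : 1 ≤ n)
    (hg : ∀ v : Fin n → A, α (g v) = g fun t => α (v t)) (a : ℕ → A) :
    μ (toCochain m f (cseq (⇑α) n (toCochain n g) m a))
        ((⇑α)^[m - 1] (cseq (⇑α) n (toCochain n g) m a m))
      = cup (fun x y => μ x y) (⇑α) m n (toCochain m f) (toCochain n g) a := by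
  unfold cup
  have h1 : toCochain m f (cseq (⇑α) n (toCochain n g) m a)
      = toCochain m f (fun j => (⇑α)^[n - 1] (a j)) := by
    apply tc_congr
    intro j hj
    rw [cseq_lt _ _ _ _ _ hj]
  have h2 : (⇑α)^[m - 1] (cseq (⇑α) n (toCochain n g) m a m)
      = toCochain n g (fun j => (⇑α)^[m - 1] (a (m + j))) := by
    rw [cseq_eq, it_equiv (hf' α g hg)]
  rw [h1, h2]

theorem E5 (hn : 1 ≤ n) (hαμ : ∀ x y : A, α (μ x y) = μ (α x) (α y))
    (hg : ∀ v : Fin n → A, α (g v) = g fun t => α (v t))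
    {i k : ℕ} (hk : k < i) (a : ℕ → A) :
    toCochain m f (Dseq (fun x y => μ x y) (⇑α) k (cseq (⇑α) n (toCochain n g) (i + 1) a))
      = pcomp (⇑α) n (toCochain m f) (toCochain n g) (i + 1)
          (Dseq (fun x y => μ x y) (⇑α) k a) := by
  rw [pcomp_eq]
  apply tc_congr
  intro j hj
  rcases Nat.lt_trichotomy j k with h1 | h1 | h1
  · rw [Dseq_lt _ _ _ _ h1, cseq_lt _ _ _ _ _ (by omega), cseq_lt _ _ _ _ _ (by omega),
      Dseq_lt _ _ _ _ h1, it_swap]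
  · subst h1
    rw [Dseq_eq, cseq_lt _ _ _ _ _ (by omega), cseq_lt _ _ _ _ _ (by omega),
      cseq_lt _ _ _ _ _ (by omega), Dseq_eq, it_mul hαμ]
  · rcases Nat.lt_trichotomy j i with h2 | h2 | h2
    · rw [Dseq_gt _ _ _ _ h1, cseq_lt _ _ _ _ _ (by omega), cseq_lt _ _ _ _ _ h2,
        Dseq_gt _ _ _ _ h1, it_swap]
    · subst h2
      rw [Dseq_gt _ _ _ _ h1, cseq_eq, cseq_eq, hf' α g hg]
      apply tc_congr
      intro t ht
      rw [Dseq_gt _ _ _ _ (by omega), show j + 1 + t = j + t + 1 by omega]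
    · rw [Dseq_gt _ _ _ _ h1, cseq_gt _ _ _ _ _ (by omega), cseq_gt _ _ _ _ _ h2,
        Dseq_gt _ _ _ _ (by omega), it_swap, show j + 1 + n - 1 = j + n - 1 + 1 by omega]

theorem E6 (hn : 1 ≤ n) {i : ℕ} (a : ℕ → A) :
    toCochain m f (Dseq (fun x y => μ x y) (⇑α) i (cseq (⇑α) n (toCochain n g) (i + 1) a))
      = toCochain m f (ins (vQ (⇑α) n i a) i
          (μ ((⇑α)^[n - 1] (a i)) (toCochain n g (fun k => a (i + (k + 1)))))) := by
  apply tc_congr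
  intro j hj
  rcases Nat.lt_trichotomy j i with h1 | h1 | h1
  · rw [Dseq_lt _ _ _ _ h1, cseq_lt _ _ _ _ _ (by omega), ins_ne _ _ _ (by omega),
      vQ_lt _ _ _ _ h1, it_pred α hn]
  · subst h1
    rw [Dseq_eq, cseq_lt _ _ _ _ _ (by omega), cseq_eq, ins_self]
    congr 1
    apply tc_congr
    intro k hk
    rw [show j + 1 + k = j + (k + 1) by omega]
  · rw [Dseq_gt _ _ _ _ h1, cseq_gt _ _ _ _ _ (by omega), ins_ne _ _ _ (by omega),
      vQ_gt _ _ _ _ h1, it_pred α hn, show j + 1 + n - 1 = j + n by omega]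

theorem E7 (hn : 1 ≤ n) {i : ℕ} (a : ℕ → A) :
    toCochain m f (Dseq (fun x y => μ x y) (⇑α) i (cseq (⇑α) n (toCochain n g) i a))
      = toCochain m f (ins (vQ (⇑α) n i a) i
          (μ (toCochain n g (fun k => a (i + k))) ((⇑α)^[n - 1] (a (i + n))))) := by
  apply tc_congr
  intro j hj
  rcases Nat.lt_trichotomy j i with h1 | h1 | h1
  · rw [Dseq_lt _ _ _ _ h1, cseq_lt _ _ _ _ _ h1, ins_ne _ _ _ (by omega),
      vQ_lt _ _ _ _ h1, it_pred α hn]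
  · subst h1
    rw [Dseq_eq, cseq_eq, cseq_gt _ _ _ _ _ (by omega), ins_self,
      show j + 1 + n - 1 = j + n by omega]
  · rw [Dseq_gt _ _ _ _ h1, cseq_gt _ _ _ _ _ (by omega), ins_ne _ _ _ (by omega),
      vQ_gt _ _ _ _ h1, it_pred α hn, show j + 1 + n - 1 = j + n by omega]

theorem E8 (hn : 1 ≤ n) (hαμ : ∀ x y : A, α (μ x y) = μ (α x) (α y))
    (hg : ∀ v : Fin n → A, α (g v) = g fun t => α (v t))
    {i t : ℕ} (hi : i < m) (a : ℕ → A) :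
    toCochain m f (Dseq (fun x y => μ x y) (⇑α) (i + 1 + t)
        (cseq (⇑α) n (toCochain n g) i a))
      = pcomp (⇑α) n (toCochain m f) (toCochain n g) (i + 1)
          (Dseq (fun x y => μ x y) (⇑α) (i + n + t) a) := by
  rw [pcomp_eq]
  apply tc_congr
  intro j hj
  rcases Nat.lt_trichotomy j (i + 1 + t) with h1 | h1 | h1
  · rcases Nat.lt_trichotomy j i with h2 | h2 | h2
    · rw [Dseq_lt _ _ _ _ h1, cseq_lt _ _ _ _ _ h2, cseq_lt _ _ _ _ _ h2,
        Dseq_lt _ _ _ _ (by omega), it_swap]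
    · subst h2
      rw [Dseq_lt _ _ _ _ h1, cseq_eq, cseq_eq, hf' α g hg]
      apply tc_congr
      intro k hk
      rw [Dseq_lt _ _ _ _ (by omega)]
    · rw [Dseq_lt _ _ _ _ h1, cseq_gt _ _ _ _ _ h2, cseq_gt _ _ _ _ _ h2,
        Dseq_lt _ _ _ _ (by omega), it_swap]
  · subst h1
    rw [Dseq_eq, cseq_gt _ _ _ _ _ (by omega), cseq_gt _ _ _ _ _ (by omega),
      cseq_gt _ _ _ _ _ (by omega), show i + 1 + t + n - 1 = i + n + t by omega,
      show i + 1 + t + 1 + n - 1 = i + n + t + 1 by omega, Dseq_eq, it_mul hαμ]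
  · rw [Dseq_gt _ _ _ _ h1, cseq_gt _ _ _ _ _ (by omega), cseq_gt _ _ _ _ _ (by omega),
      Dseq_gt _ _ _ _ (by omega), it_swap, show j + 1 + n - 1 = j + n - 1 + 1 by omega]

theorem E9 (hn : 1 ≤ n) {i k' : ℕ} (hk : k' < n) (a : ℕ → A) :
    toCochain m f (ins (vQ (⇑α) n i a) i
        (toCochain n g (Dseq (fun x y => μ x y) (⇑α) k' (fun k => a (i + k)))))
      = pcomp (⇑α) n (toCochain m f) (toCochain n g) (i + 1)
          (Dseq (fun x y => μ x y) (⇑α) (i + k') a) := by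
  rw [pcomp_eq]
  apply tc_congr
  intro j hj
  rcases Nat.lt_trichotomy j i with h1 | h1 | h1
  · rw [ins_ne _ _ _ (by omega), vQ_lt _ _ _ _ h1, cseq_lt _ _ _ _ _ h1,
      Dseq_lt _ _ _ _ (by omega), it_pred' α hn]
  · subst h1
    rw [ins_self, cseq_eq]
    apply tc_congr
    intro k hk2
    rcases Nat.lt_trichotomy k k' with h2 | h2 | h2
    · rw [Dseq_lt _ _ _ _ h2, Dseq_lt _ _ _ _ (by omega)]
    · subst h2
      rw [Dseq_eq, Dseq_eq, show j + k + 1 = j + (k + 1) by omega]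
    · rw [Dseq_gt _ _ _ _ h2, Dseq_gt _ _ _ _ (by omega),
        show j + k + 1 = j + (k + 1) by omega]
  · rw [ins_ne _ _ _ (by omega), vQ_gt _ _ _ _ h1, cseq_gt _ _ _ _ _ h1,
      Dseq_gt _ _ _ _ (by omega), it_pred' α hn,
      show j + n - 1 + 1 = j + n by omega]

theorem QSsplit {i : ℕ} (a : ℕ → A) :
    pcomp (⇑α) (n + 1) (toCochain m f)
        (hdelta (fun x y => μ x y) (⇑α) n (toCochain n g)) (i + 1) a
      = toCochain m f (ins (vQ (⇑α) n i a) i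
          (hdelta (fun x y => μ x y) (⇑α) n (toCochain n g) (fun k => a (i + k)))) := by
  rw [pcomp_eq]
  apply tc_congr
  intro j hj
  rcases Nat.lt_trichotomy j i with h1 | h1 | h1
  · rw [cseq_lt _ _ _ _ _ h1, ins_ne _ _ _ (by omega), vQ_lt _ _ _ _ h1,
      show n + 1 - 1 = n from rfl]
  · subst h1
    rw [cseq_eq, ins_self]
  · rw [cseq_gt _ _ _ _ _ h1, ins_ne _ _ _ (by omega), vQ_gt _ _ _ _ h1,
      show n + 1 - 1 = n from rfl, show j + (n + 1) - 1 = j + n from rfl]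

end Atoms
end CupAux

namespace CupAux
open Finset Function
section QS

variable {K A : Type*} [Field K] [AddCommGroup A] [Module K A]
variable (μ : A →ₗ[K] A →ₗ[K] A) (α : A →ₗ[K] A) {m n : ℕ}
variable (f : MultilinearMap K (fun _ : Fin m => A) A)
variable (g : MultilinearMap K (fun _ : Fin n => A) A)

def X1 (i : ℕ) (a : ℕ → A) : A :=
  toCochain m f (ins (vQ (⇑α) n i a) i
    (μ ((⇑α)^[n - 1] (a i)) (toCochain n g (fun k => a (i + (k + 1))))))

def X2 (i : ℕ) (a : ℕ → A) : A :=
  toCochain m f (ins (vQ (⇑α) n i a) i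
    (μ (toCochain n g (fun k => a (i + k))) ((⇑α)^[n - 1] (a (i + n)))))

theorem E6' (hn : 1 ≤ n) {i : ℕ} (a : ℕ → A) :
    toCochain m f (Dseq (fun x y => μ x y) (⇑α) i (cseq (⇑α) n (toCochain n g) (i + 1) a))
      = X1 μ α f g i a := E6 μ α f g hn a

theorem E7' (hn : 1 ≤ n) {i : ℕ} (a : ℕ → A) :
    toCochain m f (Dseq (fun x y => μ x y) (⇑α) i (cseq (⇑α) n (toCochain n g) i a))
      = X2 μ α f g i a := E7 μ α f g hn a

theorem QSexp (hn : 1 ≤ n) {i : ℕ} (hi : i < m) (a : ℕ → A) :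
    pcomp (⇑α) (n + 1) (toCochain m f)
        (hdelta (fun x y => μ x y) (⇑α) n (toCochain n g)) (i + 1) a
      = X1 μ α f g i a
        + (∑ k ∈ range n, ((-1 : ℤ) ^ (k + 1)) •
            pcomp (⇑α) n (toCochain m f) (toCochain n g) (i + 1)
              (Dseq (fun x y => μ x y) (⇑α) (i + k) a))
        + ((-1 : ℤ) ^ (n + 1)) • X2 μ α f g i a := by
  rw [QSsplit μ α f g a, hdelta_eq, tc_ins_add f _ i hi, tc_ins_add f _ i hi,
    tc_ins_sum f _ i hi, tc_ins_zsmul f _ i hi]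
  congr 1
  · congr 1
    apply sum_congr rfl
    intro k hk
    rw [tc_ins_zsmul f _ i hi, E9 μ α f g hn (mem_range.mp hk) a]

/-- full Q-sum expansion -/
theorem hQS (hn : 1 ≤ n) (a : ℕ → A) :
    (∑ i ∈ range m, ((-1 : ℤ) ^ (n * i)) •
        pcomp (⇑α) (n + 1) (toCochain m f)
          (hdelta (fun x y => μ x y) (⇑α) n (toCochain n g)) (i + 1) a)
      = (∑ i ∈ range m, ((-1 : ℤ) ^ (n * i)) • X1 μ α f g i a)
        + (∑ i ∈ range m, ∑ k ∈ range n, ((-1 : ℤ) ^ (n * i + (k + 1))) •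
            pcomp (⇑α) n (toCochain m f) (toCochain n g) (i + 1)
              (Dseq (fun x y => μ x y) (⇑α) (i + k) a))
        + (∑ i ∈ range m, ((-1 : ℤ) ^ (n * i + (n + 1))) • X2 μ α f g i a) := by
  rw [← sum_add_distrib, ← sum_add_distrib]
  apply sum_congr rfl
  intro i hi
  rw [QSexp μ α f g hn (mem_range.mp hi) a, smul_add, smul_add, smul_sum]
  congr 1
  · congr 1
    apply sum_congr rfl
    intro k hk
    rw [smul_smul, ← pow_add]
  · rw [smul_smul, ← pow_add]

end QS
end CupAux

namespace CupAux
open Finset Function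
section RS

variable {K A : Type*} [Field K] [AddCommGroup A] [Module K A]
variable (μ : A →ₗ[K] A →ₗ[K] A) (α : A →ₗ[K] A) {m n : ℕ}
variable (f : MultilinearMap K (fun _ : Fin m => A) A)
variable (g : MultilinearMap K (fun _ : Fin n => A) A)

theorem pm2 {n : ℕ} (hn : 1 ≤ n) (i : ℕ) : (n - 1) * i + i = n * i := by
  have h : n - 1 + 1 = n := by omega
  calc (n - 1) * i + i = ((n - 1) + 1) * i := by ring
    _ = n * i := by rw [h]

theorem sgn_drop {a b : ℕ} (c : ℕ) (h : a = b + 2 * c) : ((-1 : ℤ)) ^ a = (-1) ^ b := by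
  rw [h, sgn_shift]

theorem sgn_pair (e : ℕ) (x : A) :
    ((-1 : ℤ)) ^ e • x + ((-1 : ℤ)) ^ (e + 1) • x = 0 := by
  rw [sgn_succ_smul]
  exact add_neg_cancel _

theorem sgn_pred {e : ℕ} (he : 1 ≤ e) (x : A) :
    ((-1 : ℤ)) ^ (e - 1) • x + ((-1 : ℤ)) ^ e • x = 0 := by
  obtain ⟨d, rfl⟩ : ∃ d, e = d + 1 := ⟨e - 1, by omega⟩
  rw [Nat.add_sub_cancel]
  exact sgn_pair d x

theorem sgn_cup {m n : ℕ} (hm : 1 ≤ m) (hn : 1 ≤ n) (x : A) :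
    ((-1 : ℤ)) ^ ((n - 1) + ((n - 1) * m + (m + 1))) • x
      + ((-1 : ℤ)) ^ ((m - 1) * n + 1) • x = 0 := by
  obtain ⟨q, rfl⟩ : ∃ q, m = q + 1 := ⟨m - 1, by omega⟩
  obtain ⟨p, rfl⟩ : ∃ p, n = p + 1 := ⟨n - 1, by omega⟩
  rw [Nat.add_sub_cancel, Nat.add_sub_cancel]
  rw [show p + (p * (q + 1) + (q + 1 + 1)) = (q * (p + 1) + 1) + (2 * p + 1) by ring]
  rw [pow_add, show ((-1 : ℤ)) ^ (2 * p + 1) = -1 from Odd.neg_one_pow ⟨p, by ring⟩]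
  rw [mul_neg_one, neg_smul]
  exact neg_add_cancel _

/-- RS splitting into the three hdelta pieces -/
theorem hRS (a : ℕ → A) :
    (∑ i ∈ range (m + 1), ((-1 : ℤ) ^ ((n - 1) * i)) •
        pcomp (⇑α) n (hdelta (fun x y => μ x y) (⇑α) m (toCochain m f))
          (toCochain n g) (i + 1) a)
      = (∑ i ∈ range (m + 1), ((-1 : ℤ) ^ ((n - 1) * i)) •
          μ ((⇑α)^[m - 1] (cseq (⇑α) n (toCochain n g) i a 0))
            (toCochain m f (shf (cseq (⇑α) n (toCochain n g) i a))))
        + (∑ i ∈ range (m + 1), ((-1 : ℤ) ^ ((n - 1) * i)) •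
            (∑ k ∈ range m, ((-1 : ℤ) ^ (k + 1)) •
              toCochain m f (Dseq (fun x y => μ x y) (⇑α) k
                (cseq (⇑α) n (toCochain n g) i a))))
        + (∑ i ∈ range (m + 1), ((-1 : ℤ) ^ ((n - 1) * i + (m + 1))) •
            μ (toCochain m f (cseq (⇑α) n (toCochain n g) i a))
              ((⇑α)^[m - 1] (cseq (⇑α) n (toCochain n g) i a m))) := by
  rw [← sum_add_distrib, ← sum_add_distrib]
  apply sum_congr rfl
  intro i hi
  rw [pcomp_eq, hdelta_eq, smul_add, smul_add]
  congr 1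
  rw [smul_smul, ← pow_add]

/-- the U-part -/
theorem hU (hm : 1 ≤ m) (hn : 1 ≤ n)
    (hg : ∀ v : Fin n → A, α (g v) = g fun t => α (v t)) (a : ℕ → A) :
    ((-1 : ℤ) ^ (n - 1)) • (∑ i ∈ range (m + 1), ((-1 : ℤ) ^ ((n - 1) * i)) •
        μ ((⇑α)^[m - 1] (cseq (⇑α) n (toCochain n g) i a 0))
          (toCochain m f (shf (cseq (⇑α) n (toCochain n g) i a))))
      = (∑ i ∈ range m, ((-1 : ℤ) ^ ((n - 1) * i)) •
          μ ((⇑α)^[m + n - 2] (a 0))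
            (pcomp (⇑α) n (toCochain m f) (toCochain n g) (i + 1) (shf a)))
        + ((-1 : ℤ) ^ (n - 1)) •
            cup (fun x y => μ x y) (⇑α) n m (toCochain n g) (toCochain m f) a := by
  rw [sum_range_succ', smul_add]
  congr 1
  · rw [smul_sum]
    apply sum_congr rfl
    intro i hi
    rw [E1 μ α f g hm hn i a, smul_smul, ← pow_add, Nat.mul_succ]
    congr 1
    generalize (n - 1) * i = P
    exact sgn_drop (n - 1) (by omega)
  · rw [Nat.mul_zero, pow_zero, one_smul, E2 μ α f g hm hn hg a]

/-- the W-part -/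
theorem hW (hm : 1 ≤ m) (hn : 1 ≤ n)
    (hg : ∀ v : Fin n → A, α (g v) = g fun t => α (v t)) (a : ℕ → A) :
    ((-1 : ℤ) ^ (n - 1)) • (∑ i ∈ range (m + 1), ((-1 : ℤ) ^ ((n - 1) * i + (m + 1))) •
        μ (toCochain m f (cseq (⇑α) n (toCochain n g) i a))
          ((⇑α)^[m - 1] (cseq (⇑α) n (toCochain n g) i a m)))
      = (∑ i ∈ range m, ((-1 : ℤ) ^ ((n - 1) * i + (m + n))) •
          μ (pcomp (⇑α) n (toCochain m f) (toCochain n g) (i + 1) a)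
            ((⇑α)^[m + n - 2] (a (m + n - 1))))
        + ((-1 : ℤ) ^ ((n - 1) + ((n - 1) * m + (m + 1)))) •
            cup (fun x y => μ x y) (⇑α) m n (toCochain m f) (toCochain n g) a := by
  rw [sum_range_succ, smul_add]
  congr 1
  · rw [smul_sum]
    apply sum_congr rfl
    intro i hi
    rw [E3 μ α f g hn (mem_range.mp hi) a, smul_smul, ← pow_add]
    congr 1
    generalize (n - 1) * i = P
    rw [show (n - 1) + (P + (m + 1)) = P + (m + n) by omega]
  · rw [smul_smul, ← pow_add, E4 μ α f g hm hn hg a]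

/-- the V-part -/
theorem hV (hm : 1 ≤ m) (hn : 1 ≤ n)
    (hαμ : ∀ x y : A, α (μ x y) = μ (α x) (α y))
    (hg : ∀ v : Fin n → A, α (g v) = g fun t => α (v t)) (a : ℕ → A) :
    ((-1 : ℤ) ^ (n - 1)) • (∑ i ∈ range (m + 1), ((-1 : ℤ) ^ ((n - 1) * i)) •
        (∑ k ∈ range m, ((-1 : ℤ) ^ (k + 1)) •
          toCochain m f (Dseq (fun x y => μ x y) (⇑α) k
            (cseq (⇑α) n (toCochain n g) i a))))
      = ((∑ i ∈ range m, ∑ k ∈ range i, ((-1 : ℤ) ^ ((n - 1) * i + (k + 1))) •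
            pcomp (⇑α) n (toCochain m f) (toCochain n g) (i + 1)
              (Dseq (fun x y => μ x y) (⇑α) k a))
          + (∑ i ∈ range m, ((-1 : ℤ) ^ (n * i + 1)) • X1 μ α f g i a))
        + ((∑ i ∈ range m, ∑ t ∈ range (m - 1 - i), ((-1 : ℤ) ^ ((n - 1) * i + (i + n + t + 1))) •
            pcomp (⇑α) n (toCochain m f) (toCochain n g) (i + 1)
              (Dseq (fun x y => μ x y) (⇑α) (i + n + t) a))
          + (∑ i ∈ range m, ((-1 : ℤ) ^ (n * i + n)) • X2 μ α f g i a)) := by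
  have hsplit : ∀ i' ∈ range (m + 1),
      ((-1 : ℤ) ^ ((n - 1) * i')) • (∑ k ∈ range m, ((-1 : ℤ) ^ (k + 1)) •
          toCochain m f (Dseq (fun x y => μ x y) (⇑α) k
            (cseq (⇑α) n (toCochain n g) i' a)))
        = ((-1 : ℤ) ^ ((n - 1) * i')) • (∑ k ∈ range i', ((-1 : ℤ) ^ (k + 1)) •
            toCochain m f (Dseq (fun x y => μ x y) (⇑α) k
              (cseq (⇑α) n (toCochain n g) i' a)))
          + ((-1 : ℤ) ^ ((n - 1) * i')) • (∑ t ∈ range (m - i'), ((-1 : ℤ) ^ ((i' + t) + 1)) •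
              toCochain m f (Dseq (fun x y => μ x y) (⇑α) (i' + t)
                (cseq (⇑α) n (toCochain n g) i' a))) := by
    intro i' hi'
    rw [sum_range_split _ (show i' ≤ m by have := mem_range.mp hi'; omega), smul_add]
  rw [sum_congr rfl hsplit, sum_add_distrib, smul_add]
  congr 1
  · -- left part
    rw [sum_range_succ', sum_range_zero, smul_zero, add_zero, smul_sum, ← sum_add_distrib]
    apply sum_congr rfl
    intro i hi
    rw [sum_range_succ, E6' μ α f g hn a, smul_add, smul_add]
    congr 1
    · rw [smul_smul, ← pow_add, Nat.mul_succ, smul_sum]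
      apply sum_congr rfl
      intro k hk
      rw [smul_smul, ← pow_add, E5 μ α f g hn hαμ hg (mem_range.mp hk) a]
      congr 1
      generalize (n - 1) * i = P
      exact sgn_drop (n - 1) (by omega)
    · rw [smul_smul, ← pow_add, Nat.mul_succ, smul_smul, ← pow_add]
      congr 1
      rw [← pm2 hn i]
      generalize (n - 1) * i = P
      exact sgn_drop (n - 1) (by omega)
  · -- right part
    rw [sum_range_succ, Nat.sub_self, sum_range_zero, smul_zero, add_zero, smul_sum,
      ← sum_add_distrib]
    apply sum_congr rfl
    intro i hi
    rw [show m - i = (m - 1 - i) + 1 by have := mem_range.mp hi; omega, sum_range_succ']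
    simp only [Nat.add_zero]
    rw [E7' μ α f g hn a, smul_add, smul_add]
    congr 1
    · rw [smul_smul, ← pow_add, smul_sum]
      apply sum_congr rfl
      intro t ht
      rw [show i + (t + 1) = i + 1 + t by omega,
        E8 μ α f g hn hαμ hg (mem_range.mp hi) a, smul_smul, ← pow_add]
      congr 1
      generalize (n - 1) * i = P
      rw [show ((n - 1) + P) + ((i + 1 + t) + 1) = P + (i + n + t + 1) by omega]
    · rw [smul_smul, ← pow_add, smul_smul, ← pow_add]
      congr 1
      rw [← pm2 hn i]
      generalize (n - 1) * i = P
      rw [show ((n - 1) + P) + (i + 1) = (P + i) + n by omega]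

end RS
end CupAux

namespace CupAux
open Finset Function
section KeySec

variable {K A : Type*} [Field K] [AddCommGroup A] [Module K A]
variable (μ : A →ₗ[K] A →ₗ[K] A) (α : A →ₗ[K] A) {m n : ℕ}
variable (f : MultilinearMap K (fun _ : Fin m => A) A)
variable (g : MultilinearMap K (fun _ : Fin n => A) A)

/-- LHS expansion of `hdelta (circ f g)` -/
theorem Lexp (hm : 1 ≤ m) (hn : 1 ≤ n) (a : ℕ → A) :
    hdelta (fun x y => μ x y) (⇑α) (m + n - 1)
        (circ (⇑α) m n (toCochain m f) (toCochain n g)) a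
      = (∑ i ∈ range m, ((-1 : ℤ) ^ ((n - 1) * i)) •
            μ ((⇑α)^[m + n - 2] (a 0))
              (pcomp (⇑α) n (toCochain m f) (toCochain n g) (i + 1) (shf a)))
        + (∑ i ∈ range m, ∑ k ∈ range i, ((-1 : ℤ) ^ ((n - 1) * i + (k + 1))) •
            pcomp (⇑α) n (toCochain m f) (toCochain n g) (i + 1)
              (Dseq (fun x y => μ x y) (⇑α) k a))
        + (∑ i ∈ range m, ∑ k ∈ range n, ((-1 : ℤ) ^ (n * i + (k + 1))) •
            pcomp (⇑α) n (toCochain m f) (toCochain n g) (i + 1)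
              (Dseq (fun x y => μ x y) (⇑α) (i + k) a))
        + (∑ i ∈ range m, ∑ t ∈ range (m - 1 - i), ((-1 : ℤ) ^ ((n - 1) * i + (i + n + t + 1))) •
            pcomp (⇑α) n (toCochain m f) (toCochain n g) (i + 1)
              (Dseq (fun x y => μ x y) (⇑α) (i + n + t) a))
        + (∑ i ∈ range m, ((-1 : ℤ) ^ ((n - 1) * i + (m + n))) •
            μ (pcomp (⇑α) n (toCochain m f) (toCochain n g) (i + 1) a)
              ((⇑α)^[m + n - 2] (a (m + n - 1)))) := by
  rw [hdelta_eq]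
  have H1 : μ ((⇑α)^[m + n - 1 - 1] (a 0))
        (circ (⇑α) m n (toCochain m f) (toCochain n g) (shf a))
      = (∑ i ∈ range m, ((-1 : ℤ) ^ ((n - 1) * i)) •
          μ ((⇑α)^[m + n - 2] (a 0))
            (pcomp (⇑α) n (toCochain m f) (toCochain n g) (i + 1) (shf a))) := by
    simp only [circ]
    rw [muR_sum μ, show m + n - 1 - 1 = m + n - 2 by omega]
    apply sum_congr rfl
    intro i hi
    rw [muR_zsmul]
  have H3 : ((-1 : ℤ) ^ ((m + n - 1) + 1)) •
        μ (circ (⇑α) m n (toCochain m f) (toCochain n g) a)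
          ((⇑α)^[m + n - 1 - 1] (a (m + n - 1)))
      = (∑ i ∈ range m, ((-1 : ℤ) ^ ((n - 1) * i + (m + n))) •
          μ (pcomp (⇑α) n (toCochain m f) (toCochain n g) (i + 1) a)
            ((⇑α)^[m + n - 2] (a (m + n - 1)))) := by
    simp only [circ]
    rw [muL_sum μ, smul_sum, show m + n - 1 - 1 = m + n - 2 by omega]
    apply sum_congr rfl
    intro i hi
    rw [muL_zsmul, smul_smul, ← pow_add]
    congr 1
    generalize (n - 1) * i = P
    rw [show ((m + n - 1) + 1) + P = P + (m + n) by omega]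
  have H2 : (∑ k ∈ range (m + n - 1), ((-1 : ℤ) ^ (k + 1)) •
        circ (⇑α) m n (toCochain m f) (toCochain n g)
          (Dseq (fun x y => μ x y) (⇑α) k a))
      = (∑ i ∈ range m, ∑ k ∈ range i, ((-1 : ℤ) ^ ((n - 1) * i + (k + 1))) •
            pcomp (⇑α) n (toCochain m f) (toCochain n g) (i + 1)
              (Dseq (fun x y => μ x y) (⇑α) k a))
        + (∑ i ∈ range m, ∑ k ∈ range n, ((-1 : ℤ) ^ (n * i + (k + 1))) •
            pcomp (⇑α) n (toCochain m f) (toCochain n g) (i + 1)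
              (Dseq (fun x y => μ x y) (⇑α) (i + k) a))
        + (∑ i ∈ range m, ∑ t ∈ range (m - 1 - i), ((-1 : ℤ) ^ ((n - 1) * i + (i + n + t + 1))) •
            pcomp (⇑α) n (toCochain m f) (toCochain n g) (i + 1)
              (Dseq (fun x y => μ x y) (⇑α) (i + n + t) a)) := by
    have step1 : ∀ k ∈ range (m + n - 1), ((-1 : ℤ) ^ (k + 1)) •
          circ (⇑α) m n (toCochain m f) (toCochain n g)
            (Dseq (fun x y => μ x y) (⇑α) k a)
        = ∑ i ∈ range m, ((-1 : ℤ) ^ ((n - 1) * i + (k + 1))) •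
            pcomp (⇑α) n (toCochain m f) (toCochain n g) (i + 1)
              (Dseq (fun x y => μ x y) (⇑α) k a) := by
      intro k hk
      simp only [circ]
      rw [smul_sum]
      apply sum_congr rfl
      intro i hi
      rw [smul_smul, ← pow_add, Nat.add_comm (k + 1) ((n - 1) * i)]
    rw [sum_congr rfl step1, Finset.sum_comm, ← sum_add_distrib, ← sum_add_distrib]
    apply sum_congr rfl
    intro i hi
    have hi' := mem_range.mp hi
    rw [sum_range_split _ (show i ≤ m + n - 1 by omega),
      show m + n - 1 - i = n + (m - 1 - i) by omega, sum_range_add', ← add_assoc]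
    congr 1
    congr 1
    · apply sum_congr rfl
      intro k hk
      congr 1
      rw [← pm2 hn i]
      generalize (n - 1) * i = P
      rw [show P + ((i + k) + 1) = (P + i) + (k + 1) by omega]
    · apply sum_congr rfl
      intro t ht
      rw [show i + (n + t) = i + n + t by omega]
  rw [H1, H2, H3]
  abel

/-- THE KEY IDENTITY -/
theorem KEY (hm : 1 ≤ m) (hn : 1 ≤ n)
    (hαμ : ∀ x y : A, α (μ x y) = μ (α x) (α y))
    (hg : ∀ v : Fin n → A, α (g v) = g fun t => α (v t)) (a : ℕ → A) :
    hdelta (fun x y => μ x y) (⇑α) (m + n - 1)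
        (circ (⇑α) m n (toCochain m f) (toCochain n g)) a
      = (∑ i ∈ range m, ((-1 : ℤ) ^ (n * i)) •
            pcomp (⇑α) (n + 1) (toCochain m f)
              (hdelta (fun x y => μ x y) (⇑α) n (toCochain n g)) (i + 1) a)
        + ((-1 : ℤ) ^ (n - 1)) • (∑ i ∈ range (m + 1), ((-1 : ℤ) ^ ((n - 1) * i)) •
            pcomp (⇑α) n (hdelta (fun x y => μ x y) (⇑α) m (toCochain m f))
              (toCochain n g) (i + 1) a)
        + ((-1 : ℤ) ^ ((m - 1) * n + 1)) •
            cup (fun x y => μ x y) (⇑α) m n (toCochain m f) (toCochain n g) a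
        + ((-1 : ℤ) ^ n) •
            cup (fun x y => μ x y) (⇑α) n m (toCochain n g) (toCochain m f) a := by
  rw [Lexp μ α f g hm hn a, hQS μ α f g hn a, hRS μ α f g a, smul_add, smul_add,
    hU μ α f g hm hn hg a, hV μ α f g hm hn hαμ hg a, hW μ α f g hm hn hg a]
  have z1 : (∑ i ∈ range m, ((-1 : ℤ) ^ (n * i + 1)) • X1 μ α f g i a)
      = -(∑ i ∈ range m, ((-1 : ℤ) ^ (n * i)) • X1 μ α f g i a) := by
    rw [← Finset.sum_neg_distrib]
    apply sum_congr rfl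
    intro i hi
    rw [sgn_succ_smul]
  have z2 : (∑ i ∈ range m, ((-1 : ℤ) ^ (n * i + (n + 1))) • X2 μ α f g i a)
      = -(∑ i ∈ range m, ((-1 : ℤ) ^ (n * i + n)) • X2 μ α f g i a) := by
    rw [← Finset.sum_neg_distrib]
    apply sum_congr rfl
    intro i hi
    rw [show n * i + (n + 1) = (n * i + n) + 1 by ring, sgn_succ_smul]
  have z3 : ((-1 : ℤ) ^ n) •
        cup (fun x y => μ x y) (⇑α) n m (toCochain n g) (toCochain m f) a
      = -(((-1 : ℤ) ^ (n - 1)) •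
          cup (fun x y => μ x y) (⇑α) n m (toCochain n g) (toCochain m f) a) := by
    exact eq_neg_of_add_eq_zero_right (sgn_pred (A := A) hn
      (cup (fun x y => μ x y) (⇑α) n m (toCochain n g) (toCochain m f) a))
  have z4 : ((-1 : ℤ) ^ ((m - 1) * n + 1)) •
        cup (fun x y => μ x y) (⇑α) m n (toCochain m f) (toCochain n g) a
      = -(((-1 : ℤ) ^ ((n - 1) + ((n - 1) * m + (m + 1)))) •
          cup (fun x y => μ x y) (⇑α) m n (toCochain m f) (toCochain n g) a) := by
    have h0 := sgn_cup (A := A) hm hn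
      (cup (fun x y => μ x y) (⇑α) m n (toCochain m f) (toCochain n g) a)
    rw [add_comm] at h0
    exact eq_neg_of_add_eq_zero_left h0
  rw [z1, z2, z3, z4]
  abel

end KeySec
end CupAux

namespace CupAux
open Finset Function
section HCon

variable {K A : Type*} [Field K] [AddCommGroup A] [Module K A]
variable (μ : A →ₗ[K] A →ₗ[K] A) (α : A →ₗ[K] A) {m n : ℕ}
variable (f : MultilinearMap K (fun _ : Fin m => A) A)
variable (g : MultilinearMap K (fun _ : Fin n => A) A)

/-! ### zero lemmas for cocycles -/

theorem Zq (hgz : ∀ b : ℕ → A, hdelta (fun x y => μ x y) (⇑α) n (toCochain n g) b = 0)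
    {i : ℕ} (hi : i < m) (a : ℕ → A) :
    pcomp (⇑α) (n + 1) (toCochain m f)
      (hdelta (fun x y => μ x y) (⇑α) n (toCochain n g)) (i + 1) a = 0 := by
  rw [pcomp_eq]
  apply MultilinearMap.map_coord_zero f ⟨i, hi⟩
  show cseq (⇑α) (n + 1) _ i a i = 0
  rw [cseq_eq]
  exact hgz _

theorem Zr (hfz : ∀ b : ℕ → A, hdelta (fun x y => μ x y) (⇑α) m (toCochain m f) b = 0)
    (i : ℕ) (a : ℕ → A) :
    pcomp (⇑α) n (hdelta (fun x y => μ x y) (⇑α) m (toCochain m f))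
      (toCochain n g) (i + 1) a = 0 := by
  rw [pcomp_eq]
  exact hfz _

/-! ### linearity of α-iterates -/

theorem it_add (α : A →ₗ[K] A) (p : ℕ) (x y : A) :
    (⇑α)^[p] (x + y) = (⇑α)^[p] x + (⇑α)^[p] y := by
  induction p with
  | zero => rfl
  | succ p ih => rw [Function.iterate_succ_apply', ih, map_add,
      Function.iterate_succ_apply', Function.iterate_succ_apply']

/-! ### extension of Fin-tuples -/

def ext (M : ℕ) (v : Fin M → A) : ℕ → A := fun j => if h : j < M then v ⟨j, h⟩ else 0

theorem ext_lt (M : ℕ) (v : Fin M → A) {j : ℕ} (h : j < M) : ext M v j = v ⟨j, h⟩ :=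
  dif_pos h

theorem ext_update {M : ℕ} [DecidableEq (Fin M)] (v : Fin M → A) (t : Fin M) (x : A) :
    ext M (Function.update v t x) = ins (ext M v) (t : ℕ) x := by
  funext j
  by_cases h : j < M
  · by_cases h2 : j = (t : ℕ)
    · have ht : (⟨j, h⟩ : Fin M) = t := Fin.ext h2
      rw [ext_lt M _ h, ht, Function.update_self, ins, if_pos h2]
    · rw [ext_lt M _ h, Function.update_of_ne (by simpa [Fin.ext_iff] using h2),
        ins, if_neg h2, ext_lt M v h]
  · have h2 : ¬ j = (t : ℕ) := by have := t.isLt; omega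
    simp only [ext, dif_neg h, ins, if_neg h2]

/-! ### representation lemmas for insertion into pcomp -/

theorem rep1 (hn : 1 ≤ n) {i p : ℕ} (hp : p < i) (a : ℕ → A) (z : A) :
    pcomp (⇑α) n (toCochain m f) (toCochain n g) (i + 1) (ins a p z)
      = toCochain m f (ins (cseq (⇑α) n (toCochain n g) i (ins a p 0)) p
          ((⇑α)^[n - 1] z)) := by
  rw [pcomp_eq]
  apply tc_congr
  intro j hj
  by_cases h : j = p
  · subst h
    rw [cseq_lt _ _ _ _ _ hp, ins_self, ins_self]
  · rw [ins_ne _ _ _ h]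
    rcases Nat.lt_trichotomy j i with hc | hc | hc
    · rw [cseq_lt _ _ _ _ _ hc, cseq_lt _ _ _ _ _ hc, ins_ne _ _ _ h, ins_ne _ _ _ h]
    · subst hc
      rw [cseq_eq, cseq_eq]
      apply tc_congr
      intro k hk
      rw [ins_ne _ _ _ (by omega), ins_ne _ _ _ (by omega)]
    · rw [cseq_gt _ _ _ _ _ hc, cseq_gt _ _ _ _ _ hc,
        ins_ne _ _ _ (by omega), ins_ne _ _ _ (by omega)]

theorem rep2 (hn : 1 ≤ n) {i p : ℕ} (hpl : i ≤ p) (hpr : p < i + n) (a : ℕ → A) (z : A) :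
    pcomp (⇑α) n (toCochain m f) (toCochain n g) (i + 1) (ins a p z)
      = toCochain m f (ins (cseq (⇑α) n (toCochain n g) i (ins a p 0)) i
          (toCochain n g (ins (fun k => a (i + k)) (p - i) z))) := by
  rw [pcomp_eq]
  apply tc_congr
  intro j hj
  rcases Nat.lt_trichotomy j i with hc | hc | hc
  · rw [cseq_lt _ _ _ _ _ hc, ins_ne _ _ _ (by omega), ins_ne _ _ _ (by omega),
      cseq_lt _ _ _ _ _ hc, ins_ne _ _ _ (by omega)]
  · subst hc
    rw [cseq_eq, ins_self]
    apply tc_congr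
    intro k hk
    by_cases h : k = p - j
    · rw [ins, if_pos (by omega : j + k = p), ins, if_pos h]
    · rw [ins_ne _ _ _ (by omega), ins_ne _ _ _ h]
  · rw [cseq_gt _ _ _ _ _ hc, ins_ne _ _ _ (by omega), ins_ne _ _ _ (by omega),
      cseq_gt _ _ _ _ _ hc, ins_ne _ _ _ (by omega)]

theorem rep3 (hn : 1 ≤ n) {i p : ℕ} (hpl : i + n ≤ p) (a : ℕ → A) (z : A) :
    pcomp (⇑α) n (toCochain m f) (toCochain n g) (i + 1) (ins a p z)
      = toCochain m f (ins (cseq (⇑α) n (toCochain n g) i (ins a p 0)) (p - n + 1)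
          ((⇑α)^[n - 1] z)) := by
  rw [pcomp_eq]
  apply tc_congr
  intro j hj
  by_cases h : j = p - n + 1
  · subst h
    rw [cseq_gt _ _ _ _ _ (by omega), show p - n + 1 + n - 1 = p by omega, ins_self, ins_self]
  · rw [ins_ne _ _ _ h]
    rcases Nat.lt_trichotomy j i with hc | hc | hc
    · rw [cseq_lt _ _ _ _ _ hc, cseq_lt _ _ _ _ _ hc, ins_ne _ _ _ (by omega),
        ins_ne _ _ _ (by omega)]
    · subst hc
      rw [cseq_eq, cseq_eq]
      apply tc_congr
      intro k hk
      rw [ins_ne _ _ _ (by omega), ins_ne _ _ _ (by omega)]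
    · rw [cseq_gt _ _ _ _ _ hc, cseq_gt _ _ _ _ _ hc,
        ins_ne _ _ _ (by omega), ins_ne _ _ _ (by omega)]

theorem pc_ins_add (hn : 1 ≤ n) {i p : ℕ} (hi : i < m) (hp : p < m + n - 1)
    (a : ℕ → A) (x y : A) :
    pcomp (⇑α) n (toCochain m f) (toCochain n g) (i + 1) (ins a p (x + y))
      = pcomp (⇑α) n (toCochain m f) (toCochain n g) (i + 1) (ins a p x)
        + pcomp (⇑α) n (toCochain m f) (toCochain n g) (i + 1) (ins a p y) := by
  rcases Nat.lt_trichotomy p i with hc | hc | hc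
  · rw [rep1 α f g hn hc, rep1 α f g hn hc, rep1 α f g hn hc,
      it_add α (n - 1) x y, tc_ins_add f _ p (by omega)]
  · subst hc
    rw [rep2 α f g hn (le_refl p) (by omega), rep2 α f g hn (le_refl p) (by omega),
      rep2 α f g hn (le_refl p) (by omega),
      tc_ins_add g _ (p - p) (by omega), tc_ins_add f _ p (by omega)]
  · by_cases h2 : p < i + n
    · rw [rep2 α f g hn (by omega) h2, rep2 α f g hn (by omega) h2,
        rep2 α f g hn (by omega) h2,
        tc_ins_add g _ (p - i) (by omega), tc_ins_add f _ i hi]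
    · rw [rep3 α f g hn (by omega), rep3 α f g hn (by omega), rep3 α f g hn (by omega),
        it_add α (n - 1) x y, tc_ins_add f _ (p - n + 1) (by omega)]

theorem pc_ins_smul (hn : 1 ≤ n) {i p : ℕ} (hi : i < m) (hp : p < m + n - 1)
    (a : ℕ → A) (c : K) (x : A) :
    pcomp (⇑α) n (toCochain m f) (toCochain n g) (i + 1) (ins a p (c • x))
      = c • pcomp (⇑α) n (toCochain m f) (toCochain n g) (i + 1) (ins a p x) := by
  rcases Nat.lt_trichotomy p i with hc | hc | hc
  · rw [rep1 α f g hn hc, rep1 α f g hn hc,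
      it_lin α (n - 1) c x, tc_ins_smul f _ p (by omega)]
  · subst hc
    rw [rep2 α f g hn (le_refl p) (by omega), rep2 α f g hn (le_refl p) (by omega),
      tc_ins_smul g _ (p - p) (by omega), tc_ins_smul f _ p (by omega)]
  · by_cases h2 : p < i + n
    · rw [rep2 α f g hn (by omega) h2, rep2 α f g hn (by omega) h2,
        tc_ins_smul g _ (p - i) (by omega), tc_ins_smul f _ i hi]
    · rw [rep3 α f g hn (by omega), rep3 α f g hn (by omega),
        it_lin α (n - 1) c x, tc_ins_smul f _ (p - n + 1) (by omega)]

/-! ### the circle product as a multilinear map -/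

def circML (hm : 1 ≤ m) (hn : 1 ≤ n) :
    MultilinearMap K (fun _ : Fin (m + n - 1) => A) A where
  toFun v := ∑ i ∈ range m, ((-1 : ℤ) ^ ((m - 1) * n + 1 + (n - 1) * i)) •
    pcomp (⇑α) n (toCochain m f) (toCochain n g) (i + 1) (ext (m + n - 1) v)
  map_update_add' := by
    intro inst v t x y
    rw [ext_update, ext_update, ext_update, ← sum_add_distrib]
    apply sum_congr rfl
    intro i hi
    rw [pc_ins_add α f g hn (mem_range.mp hi) t.isLt, smul_add]
  map_update_smul' := by
    intro inst v t c x
    rw [ext_update, ext_update]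
    rw [smul_sum]
    apply sum_congr rfl
    intro i hi
    rw [pc_ins_smul α f g hn (mem_range.mp hi) t.isLt, smul_comm]

theorem circML_def (hm : 1 ≤ m) (hn : 1 ≤ n) (v : Fin (m + n - 1) → A) :
    circML α f g hm hn v
      = ∑ i ∈ range m, ((-1 : ℤ) ^ ((m - 1) * n + 1 + (n - 1) * i)) •
          pcomp (⇑α) n (toCochain m f) (toCochain n g) (i + 1) (ext (m + n - 1) v) := rfl

theorem circML_equivar (hm : 1 ≤ m) (hn : 1 ≤ n)
    (hf : ∀ v : Fin m → A, α (f v) = f fun t => α (v t))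
    (hg : ∀ v : Fin n → A, α (g v) = g fun t => α (v t))
    (v : Fin (m + n - 1) → A) :
    α (circML α f g hm hn v) = circML α f g hm hn (fun t => α (v t)) := by
  rw [circML_def, circML_def, map_sum α]
  apply sum_congr rfl
  intro i hi
  rw [map_zsmul α, pc_equiv α f g hf hg i (ext (m + n - 1) v)]
  congr 2
  funext j
  by_cases h : j < m + n - 1
  · rw [ext_lt _ _ h, ext_lt _ _ h]
  · simp only [ext, dif_neg h, map_zero]

theorem circML_apply (hm : 1 ≤ m) (hn : 1 ≤ n) (a : ℕ → A) :
    toCochain (m + n - 1) (circML α f g hm hn) a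
      = ((-1 : ℤ) ^ ((m - 1) * n + 1)) •
          circ (⇑α) m n (toCochain m f) (toCochain n g) a := by
  rw [show toCochain (m + n - 1) (circML α f g hm hn) a
      = circML α f g hm hn (fun j : Fin (m + n - 1) => a j) from rfl, circML_def]
  simp only [circ]
  rw [smul_sum]
  apply sum_congr rfl
  intro i hi
  rw [pc_congr α f g hn (mem_range.mp hi)
      (fun j hj => ext_lt (m + n - 1) _ hj), pow_add, mul_smul]

/-! ### hdelta commutes with ℤ-scaling of the cochain -/

theorem hdelta_zsmul (N : ℕ) (H : (ℕ → A) → A) (c : ℤ) (a : ℕ → A) :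
    hdelta (fun x y => μ x y) (⇑α) N (fun b => c • H b) a
      = c • hdelta (fun x y => μ x y) (⇑α) N H a := by
  rw [hdelta_eq, hdelta_eq, smul_add, smul_add]
  congr 1
  · congr 1
    · exact muR_zsmul μ _ c _
    · rw [smul_sum]
      apply sum_congr rfl
      intro i hi
      exact smul_comm _ c _
  · show ((-1 : ℤ) ^ (N + 1)) • μ (c • H a) ((⇑α)^[N - 1] (a N)) = _
    rw [muL_zsmul μ c, smul_comm]

end HCon
end CupAux

open CupAux in
/-- Let `(A, μ, α)` be a hom-associative algebra. The `α`-twisted cup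
product is graded commutative up to coboundary: if `f ∈ C^m_α(A,A)` and `g ∈ C^n_α(A,A)`
are cocycles, then `f ∪_α g - (-1)^{mn} g ∪_α f` lies in the image of
`δ_α : C^{m+n-1}_α(A,A) → C^{m+n}_α(A,A)`. -/
theorem cup_graded_comm_up_to_coboundary {K A : Type*} [Field K] [AddCommGroup A] [Module K A]
    (μ : A →ₗ[K] A →ₗ[K] A) (α : A →ₗ[K] A)
    (hαμ : ∀ a b : A, α (μ a b) = μ (α a) (α b))
    (hassoc : ∀ a b c : A, μ (α a) (μ b c) = μ (μ a b) (α c))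
    (m n : ℕ) (hm : 1 ≤ m) (hn : 1 ≤ n)
    (f : MultilinearMap K (fun _ : Fin m => A) A)
    (g : MultilinearMap K (fun _ : Fin n => A) A)
    (hf : ∀ a : Fin m → A, α (f a) = f fun t => α (a t))
    (hg : ∀ a : Fin n → A, α (g a) = g fun t => α (a t))
    (hfz : ∀ a : ℕ → A, hdelta (fun x y => μ x y) (⇑α) m (toCochain m f) a = 0)
    (hgz : ∀ a : ℕ → A, hdelta (fun x y => μ x y) (⇑α) n (toCochain n g) a = 0) :
    ∃ h : MultilinearMap K (fun _ : Fin (m + n - 1) => A) A,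
      (∀ b : Fin (m + n - 1) → A, α (h b) = h fun t => α (b t)) ∧
      ∀ a : ℕ → A,
        cup (fun x y => μ x y) (⇑α) m n (toCochain m f) (toCochain n g) a
            - ((-1 : ℤ) ^ (m * n)) •
                cup (fun x y => μ x y) (⇑α) n m (toCochain n g) (toCochain m f) a
          = hdelta (fun x y => μ x y) (⇑α) (m + n - 1) (toCochain (m + n - 1) h) a := by
  refine ⟨circML α f g hm hn, fun b => circML_equivar α f g hm hn hf hg b, fun a => ?_⟩
  have hq : (∑ i ∈ Finset.range m, ((-1 : ℤ) ^ (n * i)) •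
      pcomp (⇑α) (n + 1) (toCochain m f)
        (hdelta (fun x y => μ x y) (⇑α) n (toCochain n g)) (i + 1) a) = 0 := by
    apply Finset.sum_eq_zero
    intro i hi
    rw [Zq μ α f g hgz (Finset.mem_range.mp hi) a, smul_zero]
  have hr : (∑ i ∈ Finset.range (m + 1), ((-1 : ℤ) ^ ((n - 1) * i)) •
      pcomp (⇑α) n (hdelta (fun x y => μ x y) (⇑α) m (toCochain m f))
        (toCochain n g) (i + 1) a) = 0 := by
    apply Finset.sum_eq_zero
    intro i hi
    rw [Zr μ α f g hfz i a, smul_zero]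
  have hkey := KEY μ α f g hm hn hαμ hg a
  rw [hq, hr, smul_zero, zero_add, zero_add] at hkey
  have hc : toCochain (m + n - 1) (circML α f g hm hn)
      = fun b => ((-1 : ℤ) ^ ((m - 1) * n + 1)) •
          circ (⇑α) m n (toCochain m f) (toCochain n g) b :=
    funext (circML_apply α f g hm hn)
  rw [hc, hdelta_zsmul μ α (m + n - 1) _ _ a, hkey, smul_add, smul_smul, smul_smul,
    ← pow_add, ← pow_add]
  have h1 : ((-1 : ℤ)) ^ (((m - 1) * n + 1) + ((m - 1) * n + 1)) = 1 := by
    rw [show ((m - 1) * n + 1) + ((m - 1) * n + 1) = 0 + 2 * ((m - 1) * n + 1) by ring,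
      sgn_shift, pow_zero]
  have h2 : ((-1 : ℤ)) ^ (((m - 1) * n + 1) + n) = (-1) ^ (m * n + 1) := by
    obtain ⟨q, rfl⟩ : ∃ q, m = q + 1 := ⟨m - 1, by omega⟩
    rw [Nat.add_sub_cancel]
    congr 1
    ring
  rw [h1, h2, one_smul, sgn_succ_smul (m * n), sub_eq_add_neg]
end
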